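/- arXiv:1208.1803 — 5 statements merged into one kernel-verified Lean document; each statement's English description precedes it below -/
import Mathlib

section
/- For a standard Gaussian vector z in R^n with n ≥ 1, letting ξ = 3/(n+2) * ||z||_2^2 - z_1^2 and y = ξ z_1 z (a vector in R^n), one has E[||y||_2^2] ≤ 8n + 16. -/
open MeasureTheory ProbabilityTheory Real

noncomputable section
namespace GA

/-! ### One-dimensional Gaussian moments -/

lemma exp_eq (x : ℝ) : Real.exp (-(1/2) * x ^ 2) = Real.exp (-(x ^ 2 / 2)) := by
  congr 1; ring

lemma integrable_poly_gauss (k : ℕ) :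
    Integrable (fun x : ℝ => x ^ k * Real.exp (-(x ^ 2 / 2))) := by
  have h := integrable_rpow_mul_exp_neg_mul_sq (b := (1:ℝ)/2) (by norm_num)
    (s := (k : ℝ)) (by exact lt_of_lt_of_le (by norm_num) (Nat.cast_nonneg k))
  have e : (fun x : ℝ => x ^ (k:ℝ) * Real.exp (-(1/2) * x ^ 2))
      = fun x : ℝ => x ^ k * Real.exp (-(x ^ 2 / 2)) :=
    funext fun x => by rw [Real.rpow_natCast, exp_eq]
  rwa [e] at h

def I (k : ℕ) : ℝ := ∫ x : ℝ, x ^ k * Real.exp (-(x ^ 2 / 2))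

lemma I0 : I 0 = Real.sqrt (2 * π) := by
  have h := integral_gaussian (1/2 : ℝ)
  have e : (fun x : ℝ => Real.exp (-(1/2) * x ^ 2))
      = fun x : ℝ => Real.exp (-(x ^ 2 / 2)) := funext fun x => exp_eq x
  rw [e] at h
  have h2 : π / (1/2) = 2 * π := by ring
  rw [h2] at h
  simpa [I] using h

lemma Istep (k : ℕ) : I (k + 2) = ((k : ℝ) + 1) * I k := by
  have hu : ∀ x : ℝ, HasDerivAt (fun y : ℝ => y ^ (k+1)) (((k:ℝ)+1) * x ^ k) x := by
    intro x
    have := hasDerivAt_pow (k+1) x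
    simpa [Nat.cast_add] using this
  have hv : ∀ x : ℝ, HasDerivAt (fun y : ℝ => Real.exp (-(y ^ 2 / 2)))
      (Real.exp (-(x ^ 2 / 2)) * (-x)) x := by
    intro x
    have h1 : HasDerivAt (fun y : ℝ => -(y ^ 2 / 2)) (-x) x := by
      have := (hasDerivAt_pow 2 x).div_const 2
      have := this.neg
      exact this.congr_deriv (by push_cast; ring)
    exact h1.exp
  have huv' : Integrable ((fun y : ℝ => y ^ (k+1)) * fun x => Real.exp (-(x ^ 2 / 2)) * (-x)) := by
    have e : ((fun y : ℝ => y ^ (k+1)) * fun x => Real.exp (-(x ^ 2 / 2)) * (-x))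
        = fun x : ℝ => -(x ^ (k+2) * Real.exp (-(x ^ 2 / 2))) := by
      funext x; simp [Pi.mul_apply]; ring
    rw [e]
    exact (integrable_poly_gauss (k+2)).neg
  have hu'v : Integrable ((fun x : ℝ => ((k:ℝ)+1) * x ^ k) * fun x => Real.exp (-(x ^ 2 / 2))) := by
    have e : ((fun x : ℝ => ((k:ℝ)+1) * x ^ k) * fun x => Real.exp (-(x ^ 2 / 2)))
        = fun x : ℝ => ((k:ℝ)+1) * (x ^ k * Real.exp (-(x ^ 2 / 2))) := by
      funext x; simp [Pi.mul_apply]; ring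
    rw [e]
    exact (integrable_poly_gauss k).const_mul _
  have huv : Integrable ((fun y : ℝ => y ^ (k+1)) * fun x => Real.exp (-(x ^ 2 / 2))) := by
    have e : ((fun y : ℝ => y ^ (k+1)) * fun x => Real.exp (-(x ^ 2 / 2)))
        = fun x : ℝ => x ^ (k+1) * Real.exp (-(x ^ 2 / 2)) := by
      funext x; simp [Pi.mul_apply]
    rw [e]
    exact integrable_poly_gauss (k+1)
  have key := MeasureTheory.integral_mul_deriv_eq_deriv_mul_of_integrable (fun x _ => hu x) (fun x _ => hv x) huv' hu'v huv
  have lhs : (∫ x : ℝ, x ^ (k+1) * (Real.exp (-(x ^ 2 / 2)) * (-x))) = -I (k+2) := by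
    simp only [I]
    rw [← integral_neg]
    apply integral_congr_ae
    filter_upwards with x
    ring
  have rhs : (∫ x : ℝ, ((k:ℝ)+1) * x ^ k * Real.exp (-(x ^ 2 / 2))) = ((k:ℝ)+1) * I k := by
    simp only [I]
    simp_rw [mul_assoc]
    exact integral_const_mul _ _
  rw [lhs, rhs] at key
  linarith

lemma pdf_eq (x : ℝ) : gaussianPDFReal 0 1 x = (Real.sqrt (2 * π))⁻¹ * Real.exp (-(x ^ 2 / 2)) := by
  rw [gaussianPDFReal]
  norm_num
  exact Or.inl (neg_div 2 (x^2))

lemma gauss_density : gaussianReal 0 1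
    = (volume : Measure ℝ).withDensity fun x => ((gaussianPDFReal 0 1 x).toNNReal : ENNReal) := by
  rw [gaussianReal_of_var_ne_zero 0 one_ne_zero]
  rfl

def gm (k : ℕ) : ℝ := ∫ x : ℝ, x ^ k ∂(gaussianReal 0 1)

lemma gm_eq (k : ℕ) : gm k = (Real.sqrt (2 * π))⁻¹ * I k := by
  rw [gm, gauss_density, integral_withDensity_eq_integral_smul
    ((measurable_gaussianPDFReal 0 1).real_toNNReal) (fun x => x ^ k)]
  have e : ∀ x : ℝ, (gaussianPDFReal 0 1 x).toNNReal • x ^ k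
      = (Real.sqrt (2 * π))⁻¹ * (x ^ k * Real.exp (-(x ^ 2 / 2))) := by
    intro x
    rw [NNReal.smul_def, Real.coe_toNNReal _ (gaussianPDFReal_nonneg 0 1 x), pdf_eq,
      smul_eq_mul]
    ring
  simp_rw [e]
  rw [integral_const_mul]
  rfl

lemma integrable_pow_gauss (k : ℕ) : Integrable (fun x : ℝ => x ^ k) (gaussianReal 0 1) := by
  rw [gauss_density, integrable_withDensity_iff_integrable_smul
    ((measurable_gaussianPDFReal 0 1).real_toNNReal)]
  have e : ∀ x : ℝ, (gaussianPDFReal 0 1 x).toNNReal • x ^ k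
      = (Real.sqrt (2 * π))⁻¹ * (x ^ k * Real.exp (-(x ^ 2 / 2))) := by
    intro x
    rw [NNReal.smul_def, Real.coe_toNNReal _ (gaussianPDFReal_nonneg 0 1 x), pdf_eq,
      smul_eq_mul]
    ring
  simp_rw [e]
  exact (integrable_poly_gauss k).const_mul _

lemma sqrt2pi_pos : 0 < Real.sqrt (2 * π) := Real.sqrt_pos.2 (by positivity)

lemma gm_zero : gm 0 = 1 := by simp [gm]

lemma gm_two : gm 2 = 1 := by
  rw [gm_eq, show (2:ℕ) = 0 + 2 from rfl, Istep 0, I0]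
  field_simp
  simp

lemma gm_four : gm 4 = 3 := by
  rw [gm_eq, show (4:ℕ) = 2 + 2 from rfl, Istep 2, show I 2 = I (0 + 2) from rfl, Istep 0, I0]
  field_simp
  ring

lemma gm_six : gm 6 = 15 := by
  rw [gm_eq, show (6:ℕ) = 4 + 2 from rfl, Istep 4, show (4:ℕ) = 2 + 2 from rfl, Istep 2,
    show (2:ℕ) = 0 + 2 from rfl, Istep 0, I0]
  field_simp
  ring

lemma gm_eight : gm 8 = 105 := by
  rw [gm_eq, show (8:ℕ) = 6 + 2 from rfl, Istep 6, show (6:ℕ) = 4 + 2 from rfl, Istep 4,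
    show (4:ℕ) = 2 + 2 from rfl, Istep 2, show (2:ℕ) = 0 + 2 from rfl, Istep 0, I0]
  field_simp
  ring


/-! ### Product measure -/

lemma integral_pi_monomial (n : ℕ) (e : Fin n → ℕ) :
    (∫ z : Fin n → ℝ, ∏ m, z m ^ e m ∂(Measure.pi fun _ : Fin n => gaussianReal 0 1))
      = ∏ m, gm (e m) := by
  letI : MeasureSpace ℝ := ⟨gaussianReal 0 1⟩
  haveI : SigmaFinite (volume : Measure ℝ) := inferInstanceAs (SigmaFinite (gaussianReal 0 1))
  exact MeasureTheory.integral_fintype_prod_eq_prod (fun m (x : ℝ) => x ^ e m)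

lemma integrable_pi_monomial (n : ℕ) (e : Fin n → ℕ) :
    Integrable (fun z : Fin n → ℝ => ∏ m, z m ^ e m)
      (Measure.pi fun _ : Fin n => gaussianReal 0 1) := by
  letI : MeasureSpace ℝ := ⟨gaussianReal 0 1⟩
  haveI : SigmaFinite (volume : Measure ℝ) := inferInstanceAs (SigmaFinite (gaussianReal 0 1))
  exact Integrable.fintype_prod (f := fun m (x : ℝ) => x ^ e m) fun m => integrable_pow_gauss (e m)

lemma pow_single {n : ℕ} (z : Fin n → ℝ) (a : Fin n) (t : ℕ) :
    z a ^ t = ∏ m, z m ^ (if m = a then t else 0) := by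
  rw [Finset.prod_congr rfl (fun m _ => by
    rw [apply_ite (fun s => z m ^ s), pow_zero] : ∀ m ∈ Finset.univ,
      z m ^ (if m = a then t else 0) = if m = a then z m ^ t else 1)]
  rw [Finset.prod_ite_eq' Finset.univ a (fun m => z m ^ t)]
  simp

lemma key2 {n : ℕ} (z : Fin n → ℝ) (a b : Fin n) (s t : ℕ) :
    z a ^ s * z b ^ t
      = ∏ m, z m ^ ((if m = a then s else 0) + (if m = b then t else 0)) := by
  rw [pow_single z a s, pow_single z b t, ← Finset.prod_mul_distrib]
  exact Finset.prod_congr rfl fun m _ => (pow_add _ _ _).symm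

lemma key3 {n : ℕ} (z : Fin n → ℝ) (a b c : Fin n) (s t u : ℕ) :
    z a ^ s * z b ^ t * z c ^ u
      = ∏ m, z m ^ ((if m = a then s else 0) + (if m = b then t else 0)
          + (if m = c then u else 0)) := by
  rw [key2 z a b s t, pow_single z c u, ← Finset.prod_mul_distrib]
  exact Finset.prod_congr rfl fun m _ => (pow_add _ _ _).symm

lemma key4 {n : ℕ} (z : Fin n → ℝ) (a b c d : Fin n) (s t u v : ℕ) :
    z a ^ s * z b ^ t * z c ^ u * z d ^ v
      = ∏ m, z m ^ ((if m = a then s else 0) + (if m = b then t else 0)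
          + (if m = c then u else 0) + (if m = d then v else 0)) := by
  rw [key3 z a b c s t u, pow_single z d v, ← Finset.prod_mul_distrib]
  exact Finset.prod_congr rfl fun m _ => (pow_add _ _ _).symm

lemma prod_single {n : ℕ} (g : ℕ → ℝ) (hg : g 0 = 1) (a : Fin n) (t : ℕ) :
    ∏ m, g (if m = a then t else 0) = g t := by
  rw [Finset.prod_congr rfl (fun m _ => by
    rw [apply_ite g, hg] : ∀ m ∈ Finset.univ,
      g (if m = a then t else 0) = if m = a then g t else 1)]
  rw [Finset.prod_ite_eq' Finset.univ a (fun _ => g t)]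
  simp

lemma prod_two {n : ℕ} (g : ℕ → ℝ) (hg : g 0 = 1) (a b : Fin n) (hab : a ≠ b) (s t : ℕ) :
    ∏ m, g ((if m = a then s else 0) + (if m = b then t else 0)) = g s * g t := by
  rw [← Finset.prod_subset (Finset.subset_univ ({a, b} : Finset (Fin n)))
    (fun x _ hx => by
      simp only [Finset.mem_insert, Finset.mem_singleton, not_or] at hx
      simp [hx.1, hx.2, hg])]
  rw [Finset.prod_pair hab]
  simp [hab, hab.symm]

lemma prod_three {n : ℕ} (g : ℕ → ℝ) (hg : g 0 = 1) (a b c : Fin n)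
    (hab : a ≠ b) (hac : a ≠ c) (hbc : b ≠ c) (s t u : ℕ) :
    ∏ m, g ((if m = a then s else 0) + (if m = b then t else 0) + (if m = c then u else 0))
      = g s * g t * g u := by
  rw [← Finset.prod_subset (Finset.subset_univ ({a, b, c} : Finset (Fin n)))
    (fun x _ hx => by
      simp only [Finset.mem_insert, Finset.mem_singleton, not_or] at hx
      simp [hx.1, hx.2.1, hx.2.2, hg])]
  rw [show ({a, b, c} : Finset (Fin n)) = insert a {b, c} from rfl,
    Finset.prod_insert (by simp [hab, hac]), Finset.prod_pair hbc]
  simp [hab, hab.symm, hac, hac.symm, hbc, hbc.symm]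
  ring

lemma prod_four {n : ℕ} (g : ℕ → ℝ) (hg : g 0 = 1) (a b c d : Fin n)
    (hab : a ≠ b) (hac : a ≠ c) (had : a ≠ d) (hbc : b ≠ c) (hbd : b ≠ d) (hcd : c ≠ d)
    (s t u v : ℕ) :
    ∏ m, g ((if m = a then s else 0) + (if m = b then t else 0) + (if m = c then u else 0)
        + (if m = d then v else 0)) = g s * g t * g u * g v := by
  rw [← Finset.prod_subset (Finset.subset_univ ({a, b, c, d} : Finset (Fin n)))
    (fun x _ hx => by
      simp only [Finset.mem_insert, Finset.mem_singleton, not_or] at hx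
      simp [hx.1, hx.2.1, hx.2.2.1, hx.2.2.2, hg])]
  rw [show ({a, b, c, d} : Finset (Fin n)) = insert a (insert b {c, d}) from rfl,
    Finset.prod_insert (by simp [hab, hac, had]),
    Finset.prod_insert (by simp [hbc, hbd]), Finset.prod_pair hcd]
  simp [hab, hab.symm, hac, hac.symm, had, had.symm, hbc, hbc.symm, hbd, hbd.symm,
    hcd, hcd.symm]
  ring

lemma mono1 {n : ℕ} (a : Fin n) (s : ℕ) :
    (∫ z : Fin n → ℝ, z a ^ s ∂(Measure.pi fun _ : Fin n => gaussianReal 0 1)) = gm s := by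
  simp_rw [pow_single (a := a) (t := s)]
  rw [integral_pi_monomial]
  exact prod_single gm gm_zero a s

lemma mono2 {n : ℕ} (a b : Fin n) (hab : a ≠ b) (s t : ℕ) :
    (∫ z : Fin n → ℝ, z a ^ s * z b ^ t ∂(Measure.pi fun _ : Fin n => gaussianReal 0 1))
      = gm s * gm t := by
  simp_rw [key2 (a := a) (b := b) (s := s) (t := t)]
  rw [integral_pi_monomial]
  exact prod_two gm gm_zero a b hab s t

lemma mono3 {n : ℕ} (a b c : Fin n) (hab : a ≠ b) (hac : a ≠ c) (hbc : b ≠ c) (s t u : ℕ) :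
    (∫ z : Fin n → ℝ, z a ^ s * z b ^ t * z c ^ u
        ∂(Measure.pi fun _ : Fin n => gaussianReal 0 1)) = gm s * gm t * gm u := by
  simp_rw [key3 (a := a) (b := b) (c := c) (s := s) (t := t) (u := u)]
  rw [integral_pi_monomial]
  exact prod_three gm gm_zero a b c hab hac hbc s t u

lemma mono4 {n : ℕ} (a b c d : Fin n) (hab : a ≠ b) (hac : a ≠ c) (had : a ≠ d)
    (hbc : b ≠ c) (hbd : b ≠ d) (hcd : c ≠ d) (s t u v : ℕ) :
    (∫ z : Fin n → ℝ, z a ^ s * z b ^ t * z c ^ u * z d ^ v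
        ∂(Measure.pi fun _ : Fin n => gaussianReal 0 1)) = gm s * gm t * gm u * gm v := by
  simp_rw [key4 (a := a) (b := b) (c := c) (d := d) (s := s) (t := t) (u := u) (v := v)]
  rw [integral_pi_monomial]
  exact prod_four gm gm_zero a b c d hab hac had hbc hbd hcd s t u v

lemma integrable_quad {n : ℕ} (a b c d : Fin n) :
    Integrable (fun z : Fin n → ℝ => z a ^ 2 * z b ^ 2 * z c ^ 2 * z d ^ 2)
      (Measure.pi fun _ : Fin n => gaussianReal 0 1) := by
  simp_rw [key4 (a := a) (b := b) (c := c) (d := d) (s := 2) (t := 2) (u := 2) (v := 2)]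
  exact integrable_pi_monomial n _

def dd {n : ℕ} (x y : Fin n) : ℝ := if x = y then 1 else 0

def W {n : ℕ} (a b c d : Fin n) : ℝ :=
  1 + 2*(dd a b + dd a c + dd a d + dd b c + dd b d + dd c d)
    + 8*(dd a b * dd b c + dd a b * dd b d + dd a c * dd c d + dd b c * dd c d)
    + 4*(dd a b * dd c d + dd a c * dd b d + dd a d * dd b c)
    + 48*(dd a b * dd a c * dd a d)

lemma ISS {n : ℕ} (a b c d : Fin n) :
    (∫ z : Fin n → ℝ, z a ^ 2 * z b ^ 2 * z c ^ 2 * z d ^ 2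
        ∂(Measure.pi fun _ : Fin n => gaussianReal 0 1)) = W a b c d := by
  by_cases hab : a = b
  · subst hab
    by_cases hac : a = c
    · subst hac
      by_cases had : a = d
      · subst had
        simp_rw [show ∀ z : Fin n → ℝ, z a^2*z a^2*z a^2*z a^2 = z a^8 from fun z => by ring]
        rw [mono1 a 8, gm_eight]
        simp [W, dd]; norm_num
      · simp_rw [show ∀ z : Fin n → ℝ, z a^2*z a^2*z a^2*z d^2 = z a^6*z d^2 from
          fun z => by ring]
        rw [mono2 a d had 6 2, gm_six, gm_two]
        simp [W, dd, had, Ne.symm had]; norm_num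
    · by_cases had : a = d
      · subst had
        simp_rw [show ∀ z : Fin n → ℝ, z a^2*z a^2*z c^2*z a^2 = z a^6*z c^2 from
          fun z => by ring]
        rw [mono2 a c hac 6 2, gm_six, gm_two]
        simp [W, dd, hac, Ne.symm hac]; norm_num
      · by_cases hcd : c = d
        · subst hcd
          simp_rw [show ∀ z : Fin n → ℝ, z a^2*z a^2*z c^2*z c^2 = z a^4*z c^4 from
            fun z => by ring]
          rw [mono2 a c hac 4 4, gm_four]
          simp [W, dd, hac, Ne.symm hac]; norm_num
        · simp_rw [show ∀ z : Fin n → ℝ, z a^2*z a^2*z c^2*z d^2 = z a^4*z c^2*z d^2 from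
            fun z => by ring]
          rw [mono3 a c d hac had hcd 4 2 2, gm_four, gm_two]
          simp [W, dd, hac, had, hcd, Ne.symm hac, Ne.symm had, Ne.symm hcd]; norm_num
  · by_cases hac : a = c
    · subst hac
      by_cases had : a = d
      · subst had
        simp_rw [show ∀ z : Fin n → ℝ, z a^2*z b^2*z a^2*z a^2 = z a^6*z b^2 from
          fun z => by ring]
        rw [mono2 a b hab 6 2, gm_six, gm_two]
        simp [W, dd, hab, Ne.symm hab]; norm_num
      · by_cases hbd : b = d
        · subst hbd
          simp_rw [show ∀ z : Fin n → ℝ, z a^2*z b^2*z a^2*z b^2 = z a^4*z b^4 from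
            fun z => by ring]
          rw [mono2 a b hab 4 4, gm_four]
          simp [W, dd, hab, had, Ne.symm hab, Ne.symm had]; norm_num
        · simp_rw [show ∀ z : Fin n → ℝ, z a^2*z b^2*z a^2*z d^2 = z a^4*z b^2*z d^2 from
            fun z => by ring]
          rw [mono3 a b d hab had hbd 4 2 2, gm_four, gm_two]
          simp [W, dd, hab, had, hbd, Ne.symm hab, Ne.symm had, Ne.symm hbd]; norm_num
    · by_cases had : a = d
      · subst had
        by_cases hbc : b = c
        · subst hbc
          simp_rw [show ∀ z : Fin n → ℝ, z a^2*z b^2*z b^2*z a^2 = z a^4*z b^4 from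
            fun z => by ring]
          rw [mono2 a b hab 4 4, gm_four]
          simp [W, dd, hab, hac, Ne.symm hab, Ne.symm hac]; norm_num
        · simp_rw [show ∀ z : Fin n → ℝ, z a^2*z b^2*z c^2*z a^2 = z a^4*z b^2*z c^2 from
            fun z => by ring]
          rw [mono3 a b c hab hac hbc 4 2 2, gm_four, gm_two]
          simp [W, dd, hab, hac, hbc, Ne.symm hab, Ne.symm hac, Ne.symm hbc]; norm_num
      · by_cases hbc : b = c
        · subst hbc
          by_cases hbd : b = d
          · subst hbd
            simp_rw [show ∀ z : Fin n → ℝ, z a^2*z b^2*z b^2*z b^2 = z a^2*z b^6 from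
              fun z => by ring]
            rw [mono2 a b hab 2 6, gm_six, gm_two]
            simp [W, dd, hab, Ne.symm hab]; norm_num
          · simp_rw [show ∀ z : Fin n → ℝ, z a^2*z b^2*z b^2*z d^2 = z a^2*z b^4*z d^2 from
              fun z => by ring]
            rw [mono3 a b d hab had hbd 2 4 2, gm_four, gm_two]
            simp [W, dd, hab, had, hbd, Ne.symm hab, Ne.symm had, Ne.symm hbd]; norm_num
        · by_cases hbd : b = d
          · subst hbd
            simp_rw [show ∀ z : Fin n → ℝ, z a^2*z b^2*z c^2*z b^2 = z a^2*z b^4*z c^2 from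
              fun z => by ring]
            rw [mono3 a b c hab hac hbc 2 4 2, gm_four, gm_two]
            simp [W, dd, hab, hac, hbc, Ne.symm hab, Ne.symm hac, Ne.symm hbc]; norm_num
          · by_cases hcd : c = d
            · subst hcd
              simp_rw [show ∀ z : Fin n → ℝ, z a^2*z b^2*z c^2*z c^2 = z a^2*z b^2*z c^4 from
                fun z => by ring]
              rw [mono3 a b c hab hac hbc 2 2 4, gm_four, gm_two]
              simp [W, dd, hab, hac, hbc, Ne.symm hab, Ne.symm hac, Ne.symm hbc]; norm_num
            · rw [mono4 a b c d hab hac had hbc hbd hcd 2 2 2 2, gm_two]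
              simp [W, dd, hab, hac, had, hbc, hbd, hcd, Ne.symm hab, Ne.symm hac, Ne.symm had, Ne.symm hbc, Ne.symm hbd, Ne.symm hcd]

lemma dd_self {n : ℕ} (x : Fin n) : dd x x = 1 := by simp [dd]

lemma sum_dd {n : ℕ} (x : Fin n) : ∑ i, dd x i = 1 := by
  simp [dd, Finset.sum_ite_eq]

lemma sum_mul_dd {n : ℕ} (c : ℝ) (x : Fin n) : ∑ i, c * dd x i = c := by
  rw [← Finset.mul_sum, sum_dd, mul_one]

lemma S1 {n : ℕ} (i0 : Fin n) : ∑ i, W i0 i0 i0 i = 15 * n + 90 := by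
  have e : ∀ i : Fin n, W i0 i0 i0 i = 15 + 90 * dd i0 i := by
    intro i
    simp only [W, dd_self]
    ring
  simp_rw [e]
  rw [Finset.sum_add_distrib, Finset.sum_const, sum_mul_dd]
  simp [Finset.card_univ]
  ring

lemma S2 {n : ℕ} (i0 : Fin n) : ∑ i, ∑ j, W i0 i0 i j = 3 * n^2 + 30 * n + 72 := by
  have e : ∀ i j : Fin n, W i0 i0 i j
      = (3 + 12*dd i0 i) + 12*dd i0 j + 6*dd i j + 16*dd i0 i*dd i j
        + 56*dd i0 i*dd i0 j := by
    intro i j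
    simp only [W, dd_self]
    ring
  have inner : ∀ i : Fin n, ∑ j, W i0 i0 i j
      = (3*(n:ℝ) + 18) + (12*(n:ℝ) + 72)*dd i0 i := by
    intro i
    simp_rw [e]
    simp only [Finset.sum_add_distrib, Finset.sum_const, sum_mul_dd, Finset.card_univ,
      Fintype.card_fin, nsmul_eq_mul]
    ring
  simp_rw [inner]
  simp only [Finset.sum_add_distrib, Finset.sum_const, sum_mul_dd, Finset.card_univ,
    Fintype.card_fin, nsmul_eq_mul]
  ring

lemma S3 {n : ℕ} (i0 : Fin n) :
    ∑ i, ∑ j, ∑ k, W i0 i j k = (n:ℝ)^3 + 12 * n^2 + 44 * n + 48 := by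
  have e : ∀ i j k : Fin n, W i0 i j k
      = (1 + 2*dd i0 i + 2*dd i0 j + 2*dd i j + 8*dd i0 i*dd i j)
        + 2*dd i0 k + 2*dd i k + 2*dd j k
        + 8*dd i0 i*dd i k + 8*dd i0 j*dd j k + 8*dd i j*dd j k
        + 4*dd i0 i*dd j k + 4*dd i0 j*dd i k + 4*dd i j*dd i0 k
        + 48*dd i0 i*dd i0 j*dd i0 k := by
    intro i j k
    simp only [W]
    ring
  have inner : ∀ i j : Fin n, ∑ k, W i0 i j k
      = ((n:ℝ) + 6) + (2*(n:ℝ)+12)*dd i0 i + (2*(n:ℝ)+12)*dd i0 j + (2*(n:ℝ)+12)*dd i j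
        + 8*(n:ℝ)*dd i0 i*dd i j + 48*dd i0 i*dd i0 j := by
    intro i j
    simp_rw [e]
    simp only [Finset.sum_add_distrib, Finset.sum_const, sum_mul_dd, Finset.card_univ,
      Fintype.card_fin, nsmul_eq_mul]
    ring
  have inner2 : ∀ i : Fin n, ∑ j, ∑ k, W i0 i j k
      = ((n:ℝ)^2 + 10*(n:ℝ) + 24) + (2*(n:ℝ)^2 + 20*(n:ℝ) + 48)*dd i0 i := by
    intro i
    simp_rw [inner]
    simp only [Finset.sum_add_distrib, Finset.sum_const, sum_mul_dd, Finset.card_univ,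
      Fintype.card_fin, nsmul_eq_mul]
    ring
  simp_rw [inner2]
  simp only [Finset.sum_add_distrib, Finset.sum_const, sum_mul_dd, Finset.card_univ,
    Fintype.card_fin, nsmul_eq_mul]
  ring

end GA

open MeasureTheory ProbabilityTheory

theorem gaussian_y_norm_second_moment (n : ℕ) (hn : 1 ≤ n) :
    (∫ z : Fin n → ℝ,
        (3 / ((n : ℝ) + 2) * (∑ i, (z i) ^ 2) - (z ⟨0, hn⟩) ^ 2) ^ 2
          * (z ⟨0, hn⟩) ^ 2 * (∑ i, (z i) ^ 2)
      ∂(Measure.pi fun _ : Fin n => gaussianReal 0 1)) ≤ 8 * (n : ℝ) + 16 := by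
  classical
  set M := Measure.pi fun _ : Fin n => gaussianReal 0 1 with hM
  set i0 : Fin n := ⟨0, hn⟩ with hi0
  set a : ℝ := 3 / ((n : ℝ) + 2) with ha
  have h_expand : ∀ z : Fin n → ℝ,
      (a * (∑ i, (z i) ^ 2) - (z i0) ^ 2) ^ 2 * (z i0) ^ 2 * (∑ i, (z i) ^ 2)
      = a ^ 2 * (∑ i, ∑ j, ∑ k, z i0 ^ 2 * z i ^ 2 * z j ^ 2 * z k ^ 2)
        - 2 * a * (∑ i, ∑ j, z i0 ^ 2 * z i0 ^ 2 * z i ^ 2 * z j ^ 2)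
        + ∑ i, z i0 ^ 2 * z i0 ^ 2 * z i0 ^ 2 * z i ^ 2 := by
    intro z
    have e1 : ∑ i, z i0 ^ 2 * z i0 ^ 2 * z i0 ^ 2 * z i ^ 2
        = z i0 ^ 2 * z i0 ^ 2 * z i0 ^ 2 * ∑ i, z i ^ 2 := by
      rw [Finset.mul_sum]
    have e2 : ∑ i, ∑ j, z i0 ^ 2 * z i0 ^ 2 * z i ^ 2 * z j ^ 2
        = (z i0 ^ 2 * z i0 ^ 2) * ((∑ i, z i ^ 2) * (∑ i, z i ^ 2)) := by
      rw [Finset.sum_mul_sum, Finset.mul_sum]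
      refine Finset.sum_congr rfl fun i _ => ?_
      rw [Finset.mul_sum]
      exact Finset.sum_congr rfl fun j _ => by ring
    have e3 : ∑ i, ∑ j, ∑ k, z i0 ^ 2 * z i ^ 2 * z j ^ 2 * z k ^ 2
        = z i0 ^ 2 * ((∑ i, z i ^ 2) * (∑ i, z i ^ 2) * (∑ i, z i ^ 2)) := by
      rw [Finset.sum_mul_sum, Finset.sum_mul, Finset.mul_sum]
      refine Finset.sum_congr rfl fun i _ => ?_
      rw [Finset.sum_mul, Finset.mul_sum]
      refine Finset.sum_congr rfl fun j _ => ?_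
      rw [show z i0 ^ 2 * (z i ^ 2 * z j ^ 2 * ∑ k, z k ^ 2)
          = (z i0 ^ 2 * z i ^ 2 * z j ^ 2) * ∑ k, z k ^ 2 from by ring, Finset.mul_sum]
    rw [e1, e2, e3]
    ring
  have hIq : ∀ b c d e : Fin n,
      Integrable (fun z : Fin n → ℝ => z b ^ 2 * z c ^ 2 * z d ^ 2 * z e ^ 2) M :=
    fun b c d e => GA.integrable_quad b c d e
  have I1 : Integrable (fun z : Fin n → ℝ =>
      ∑ i, z i0 ^ 2 * z i0 ^ 2 * z i0 ^ 2 * z i ^ 2) M :=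
    integrable_finset_sum _ fun i _ => hIq i0 i0 i0 i
  have I2 : Integrable (fun z : Fin n → ℝ =>
      ∑ i, ∑ j, z i0 ^ 2 * z i0 ^ 2 * z i ^ 2 * z j ^ 2) M :=
    integrable_finset_sum _ fun i _ => integrable_finset_sum _ fun j _ => hIq i0 i0 i j
  have I3 : Integrable (fun z : Fin n → ℝ =>
      ∑ i, ∑ j, ∑ k, z i0 ^ 2 * z i ^ 2 * z j ^ 2 * z k ^ 2) M :=
    integrable_finset_sum _ fun i _ => integrable_finset_sum _ fun j _ =>
      integrable_finset_sum _ fun k _ => hIq i0 i j k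
  have V1 : (∫ z : Fin n → ℝ, ∑ i, z i0 ^ 2 * z i0 ^ 2 * z i0 ^ 2 * z i ^ 2 ∂M)
      = 15 * (n : ℝ) + 90 := by
    rw [integral_finset_sum _ fun i _ => hIq i0 i0 i0 i,
      Finset.sum_congr rfl fun i _ => GA.ISS i0 i0 i0 i, GA.S1 i0]
  have V2 : (∫ z : Fin n → ℝ, ∑ i, ∑ j, z i0 ^ 2 * z i0 ^ 2 * z i ^ 2 * z j ^ 2 ∂M)
      = 3 * (n : ℝ) ^ 2 + 30 * n + 72 := by
    rw [integral_finset_sum _ fun i _ => integrable_finset_sum _ fun j _ => hIq i0 i0 i j,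
      Finset.sum_congr rfl fun i _ =>
        integral_finset_sum Finset.univ fun j _ => hIq i0 i0 i j,
      Finset.sum_congr rfl fun i _ => Finset.sum_congr rfl fun j _ => GA.ISS i0 i0 i j,
      GA.S2 i0]
  have V3 : (∫ z : Fin n → ℝ, ∑ i, ∑ j, ∑ k, z i0 ^ 2 * z i ^ 2 * z j ^ 2 * z k ^ 2 ∂M)
      = (n : ℝ) ^ 3 + 12 * n ^ 2 + 44 * n + 48 := by
    rw [integral_finset_sum _ fun i _ => integrable_finset_sum _ fun j _ =>
        integrable_finset_sum _ fun k _ => hIq i0 i j k,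
      Finset.sum_congr rfl fun i _ => integral_finset_sum Finset.univ fun j _ =>
        integrable_finset_sum _ fun k _ => hIq i0 i j k,
      Finset.sum_congr rfl fun i _ => Finset.sum_congr rfl fun j _ =>
        integral_finset_sum Finset.univ fun k _ => hIq i0 i j k,
      Finset.sum_congr rfl fun i _ => Finset.sum_congr rfl fun j _ =>
        Finset.sum_congr rfl fun k _ => GA.ISS i0 i j k,
      GA.S3 i0]
  rw [integral_congr_ae (ae_of_all M h_expand)]
  have IA : Integrable (fun z : Fin n → ℝ =>
      a ^ 2 * (∑ i, ∑ j, ∑ k, z i0 ^ 2 * z i ^ 2 * z j ^ 2 * z k ^ 2)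
        - 2 * a * (∑ i, ∑ j, z i0 ^ 2 * z i0 ^ 2 * z i ^ 2 * z j ^ 2)) M :=
    (I3.const_mul (a ^ 2)).sub (I2.const_mul (2 * a))
  rw [integral_add IA I1,
    integral_sub (I3.const_mul (a ^ 2)) (I2.const_mul (2 * a)),
    integral_const_mul, integral_const_mul, V1, V2, V3]
  have hn1 : (1 : ℝ) ≤ (n : ℝ) := by exact_mod_cast hn
  have hD : (0 : ℝ) < (n : ℝ) + 2 := by positivity
  have hq : a ^ 2 * ((n : ℝ) ^ 3 + 12 * n ^ 2 + 44 * n + 48)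
      - 2 * a * (3 * (n : ℝ) ^ 2 + 30 * n + 72) + (15 * (n : ℝ) + 90)
      = (6 * (n : ℝ) ^ 3 + 42 * n ^ 2 + 24 * n - 72) / ((n : ℝ) + 2) ^ 2 := by
    rw [ha]
    field_simp
    ring
  rw [hq, div_le_iff₀ (by positivity)]
  nlinarith [hn1, sq_nonneg ((n : ℝ)), pow_nonneg (le_trans zero_le_one hn1) 3]
end
end

section
/- Suppose A is injective on T and there exists Y in the range of A^* with Y restricted to T equal to zero and Y restricted to T^⊥ positive definite (on T^⊥). Then X_0 = x_0 x_0^* is the unique positive semidefinite solution of A(X) = A(X_0). -/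
open Matrix

/-- If `A` is injective on `T` and there exists `Y` in the range of `A^*`
(i.e. `Y = Σ λ_i`-combination realizing `⟨Y, X⟩ = ⟨λ, A X⟩`) with `Y_T = 0`
(equivalently `Y x₀ = 0` for symmetric `Y`) and `Y_{T^⊥} ≻ 0`
(i.e. `uᵀ Y u > 0` for all nonzero `u ⊥ x₀`), then `X₀ = x₀ x₀ᵀ` is the unique
positive semidefinite solution of `A(X) = A(X₀)`. -/
theorem exact_dual_certificate_uniqueness (n m : ℕ) (x0 : Fin n → ℝ) (hx0 : x0 ≠ 0)
    (A : Matrix (Fin n) (Fin n) ℝ →ₗ[ℝ] (Fin m → ℝ))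
    (hinjT : ∀ y : Fin n → ℝ,
      A (vecMulVec x0 y + vecMulVec y x0) = 0 → vecMulVec x0 y + vecMulVec y x0 = 0)
    (Y : Matrix (Fin n) (Fin n) ℝ) (hYsymm : Y.IsSymm)
    (lam : Fin m → ℝ)
    (hYrange : ∀ X : Matrix (Fin n) (Fin n) ℝ,
      Matrix.trace (Yᵀ * X) = ∑ i, lam i * A X i)
    (hYT : Y.mulVec x0 = 0)
    (hYTperp : ∀ u : Fin n → ℝ, u ≠ 0 → u ⬝ᵥ x0 = 0 → 0 < u ⬝ᵥ Y.mulVec u) :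
    ∀ X : Matrix (Fin n) (Fin n) ℝ, X.PosSemidef →
      A X = A (vecMulVec x0 x0) → X = vecMulVec x0 x0 := by
  intro X hX hAX
  have hYt : Yᵀ = Y := hYsymm
  have hx0x0 : x0 ⬝ᵥ x0 ≠ 0 := fun h => hx0 (dotProduct_self_eq_zero.mp h)
  -- key quadratic form facts
  have key : ∀ u : Fin n → ℝ, 0 ≤ u ⬝ᵥ Y.mulVec u ∧
      (u ⬝ᵥ Y.mulVec u = 0 → ∃ c : ℝ, u = c • x0) := by
    intro u
    set a := (u ⬝ᵥ x0) / (x0 ⬝ᵥ x0) with ha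
    set v := u - a • x0 with hv
    have hvx0 : v ⬝ᵥ x0 = 0 := by
      simp [hv, sub_dotProduct, smul_dotProduct, ha]
      field_simp
      ring
    have huv : u = v + a • x0 := by simp [hv]
    have hx0Yv : ∀ w, x0 ⬝ᵥ Y.mulVec w = 0 := by
      intro w
      rw [dotProduct_mulVec, ← mulVec_transpose, hYt, hYT]
      simp
    have hq : u ⬝ᵥ Y.mulVec u = v ⬝ᵥ Y.mulVec v := by
      rw [huv]
      simp [mulVec_add, mulVec_smul, hYT, add_dotProduct, smul_dotProduct,
        dotProduct_add, dotProduct_smul, hx0Yv]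
    rcases eq_or_ne v 0 with hv0 | hv0
    · constructor
      · rw [hq, hv0]; simp
      · intro _
        exact ⟨a, by rw [huv, hv0]; simp⟩
    · have hpos := hYTperp v hv0 hvx0
      constructor
      · rw [hq]; exact le_of_lt hpos
      · intro h0
        rw [hq] at h0
        exact absurd h0.symm (ne_of_lt hpos)
  -- trace of Yᵀ X is zero
  have htr0 : Matrix.trace (Yᵀ * X) = 0 := by
    rw [hYrange X, hAX, ← hYrange (vecMulVec x0 x0)]
    have : Matrix.trace (Yᵀ * vecMulVec x0 x0) = x0 ⬝ᵥ Y.mulVec x0 := by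
      simp [Matrix.trace, Matrix.mul_apply, vecMulVec_apply, dotProduct, mulVec,
        Matrix.diag, Finset.mul_sum]
      rw [Finset.sum_comm]
      apply Finset.sum_congr rfl
      intro i _
      apply Finset.sum_congr rfl
      intro j _
      ring
    rw [this, hYT]
    simp
  -- decompose X = Bᵀ B
  obtain ⟨B, hB⟩ : ∃ B : Matrix (Fin n) (Fin n) ℝ, X = Bᴴ * B := by
    classical
    open scoped MatrixOrder in
    exact CStarAlgebra.nonneg_iff_eq_star_mul_self.mp hX.nonneg
  rw [conjTranspose_eq_transpose_of_trivial] at hB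
  -- trace as sum of quadratic forms on rows
  have htr : Matrix.trace (Yᵀ * X) = ∑ i, (B i) ⬝ᵥ Y.mulVec (B i) := by
    rw [hB, hYt, ← Matrix.mul_assoc, Matrix.trace_mul_comm]
    simp only [Matrix.trace, Matrix.diag, Matrix.mul_apply, dotProduct, mulVec,
      transpose_apply, Finset.mul_sum, Finset.sum_mul]
  have hall : ∀ i, (B i) ⬝ᵥ Y.mulVec (B i) = 0 := by
    have hsum : ∑ i, (B i) ⬝ᵥ Y.mulVec (B i) = 0 := by rw [← htr, htr0]
    intro i
    have := (Finset.sum_eq_zero_iff_of_nonneg (fun i _ => (key (B i)).1)).mp hsum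
    exact this i (Finset.mem_univ i)
  choose c hc using fun i => (key (B i)).2 (hall i)
  -- X = (Σ c i ^2) • x₀x₀ᵀ
  set t : ℝ := ∑ i, c i ^ 2 with ht
  have hXt : X = t • vecMulVec x0 x0 := by
    rw [hB]
    ext j k
    simp only [Matrix.mul_apply, transpose_apply, Matrix.smul_apply, vecMulVec_apply, smul_eq_mul, ht,
      Finset.sum_mul]
    apply Finset.sum_congr rfl
    intro i _
    have := hc i
    have hj : B i j = c i * x0 j := by rw [this]; simp
    have hk : B i k = c i * x0 k := by rw [this]; simp
    rw [hj, hk]; ring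
  -- use injectivity
  have hz : A (vecMulVec x0 (((t-1)/2) • x0) + vecMulVec (((t-1)/2) • x0) x0) = 0 := by
    have he : vecMulVec x0 (((t-1)/2) • x0) + vecMulVec (((t-1)/2) • x0) x0
        = (t - 1) • vecMulVec x0 x0 := by
      ext j k
      simp [vecMulVec_apply, Pi.smul_apply, smul_eq_mul]
      ring
    rw [he, LinearMap.map_smul]
    have h1 : A X = t • A (vecMulVec x0 x0) := by rw [hXt]; exact A.map_smul t _
    rw [sub_smul, one_smul, ← h1, hAX, sub_self]
  have hzero := hinjT (((t-1)/2) • x0) hz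
  have he : vecMulVec x0 (((t-1)/2) • x0) + vecMulVec (((t-1)/2) • x0) x0
      = (t - 1) • vecMulVec x0 x0 := by
    ext j k
    simp [vecMulVec_apply, Pi.smul_apply, smul_eq_mul]
    ring
  rw [he] at hzero
  have hvv : vecMulVec x0 x0 ≠ 0 := by
    intro h
    obtain ⟨j, hj⟩ := Function.ne_iff.mp hx0
    have : x0 j * x0 j = 0 := by
      have := congrFun (congrFun h j) j
      simpa [vecMulVec_apply] using this
    exact hj (by simpa using mul_self_eq_zero.mp this)
  have ht1 : t = 1 := by
    rcases smul_eq_zero.mp hzero with h | h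
    · linarith
    · exact absurd h hvv
  rw [hXt, ht1, one_smul]
end

section
/- Suppose A: Sym(n) → R^m satisfies m^{-1}||A(X)||_1 ≤ (1+δ)||X||_1 for all X ⪰ 0 and m^{-1}||A(X)||_1 ≥ 0.94(1−δ)||X||_op for all X ∈ T, with δ ≤ 1/9, and there exists Ȳ in the range of A^* with ||Ȳ_T||_1 ≤ 1/2 and Ȳ_{T^⊥} ⪰ I_{T^⊥}. Then X_0 = x_0 x_0^T is the unique solution of X ⪰ 0 and A(X) = A(X_0). -/
open Matrix

/-- Nuclear norm (sum of singular values) of a real square matrix. -/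
noncomputable def nucNorm {n : ℕ} (M : Matrix (Fin n) (Fin n) ℝ) : ℝ :=
  ∑ i, Real.sqrt ((Matrix.isHermitian_conjTranspose_mul_self M).eigenvalues i)

/-- Spectral (operator) norm of a real square matrix. -/
noncomputable def opNorm {n : ℕ} (M : Matrix (Fin n) (Fin n) ℝ) : ℝ :=
  ‖LinearMap.toContinuousLinearMap (Matrix.toEuclideanLin M)‖

/-- Orthogonal projection onto `T^⊥`: `X ↦ (I − x₀x₀ᵀ) X (I − x₀x₀ᵀ)`. -/
noncomputable def TperpProj {n : ℕ} (x0 : Fin n → ℝ) (X : Matrix (Fin n) (Fin n) ℝ) :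
    Matrix (Fin n) (Fin n) ℝ :=
  (1 - vecMulVec x0 x0) * X * (1 - vecMulVec x0 x0)

/-- Orthogonal projection onto `T`. -/
noncomputable def TProj {n : ℕ} (x0 : Fin n → ℝ) (X : Matrix (Fin n) (Fin n) ℝ) :
    Matrix (Fin n) (Fin n) ℝ :=
  X - TperpProj x0 X

open Polynomial RealInnerProductSpace
open scoped MatrixOrder

variable {n : ℕ}

lemma charmatrix_mul_conj (U B V : Matrix (Fin n) (Fin n) ℝ) (hUV : U * V = 1) (hVU : V * U = 1) :
    charmatrix (U * B * V) = (C : ℝ →+* ℝ[X]).mapMatrix U * charmatrix B * (C : ℝ →+* ℝ[X]).mapMatrix V := by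
  unfold charmatrix
  rw [mul_sub, sub_mul]
  congr 1
  · conv_rhs => rw [← (Matrix.scalar_commute (X : ℝ[X]) (fun r => Commute.all _ _) ((C : ℝ →+* ℝ[X]).mapMatrix U)).eq,
      mul_assoc, ← map_mul ((C : ℝ →+* ℝ[X]).mapMatrix), hUV]
    simp
  · rw [← map_mul ((C : ℝ →+* ℝ[X]).mapMatrix), ← map_mul ((C : ℝ →+* ℝ[X]).mapMatrix)]

lemma charpoly_mul_conj (U B V : Matrix (Fin n) (Fin n) ℝ) (hUV : U * V = 1) (hVU : V * U = 1) :
    (U * B * V).charpoly = B.charpoly := by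
  unfold Matrix.charpoly
  rw [charmatrix_mul_conj U B V hUV hVU, det_mul, det_mul, mul_comm, ← mul_assoc,
    ← det_mul, ← map_mul ((C : ℝ →+* ℝ[X]).mapMatrix), hVU]
  simp

lemma charpoly_diagonal (d : Fin n → ℝ) :
    (diagonal d).charpoly = ∏ i, (X - C (d i)) := by
  unfold Matrix.charpoly
  have : charmatrix (diagonal d) = diagonal (fun i => X - C (d i)) := by
    ext i j
    rcases eq_or_ne i j with rfl | h
    · simp [charmatrix_apply]
    · simp [charmatrix_apply_ne _ _ _ h, diagonal_apply_ne _ h]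
  rw [this, det_diagonal]

lemma eigenvalues_multiset {A : Matrix (Fin n) (Fin n) ℝ} (hA : A.IsHermitian)
    (U : Matrix (Fin n) (Fin n) ℝ) (hU : U ∈ Matrix.unitaryGroup (Fin n) ℝ) (d : Fin n → ℝ)
    (hdecomp : A = U * Matrix.diagonal d * star U) :
    Finset.univ.val.map d = Finset.univ.val.map hA.eigenvalues := by
  have hU1 : U * star U = 1 := (Matrix.mem_unitaryGroup_iff).mp hU
  have hU2 : star U * U = 1 := (Matrix.mem_unitaryGroup_iff').mp hU
  have h1 : A.charpoly = ∏ i, (X - C (d i)) := by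
    rw [hdecomp, charpoly_mul_conj _ _ _ hU1 hU2, charpoly_diagonal]
  have hV1 : (hA.eigenvectorUnitary : Matrix (Fin n) (Fin n) ℝ) * star (hA.eigenvectorUnitary : Matrix (Fin n) (Fin n) ℝ) = 1 :=
    (Matrix.mem_unitaryGroup_iff).mp hA.eigenvectorUnitary.2
  have hV2 : star (hA.eigenvectorUnitary : Matrix (Fin n) (Fin n) ℝ) * (hA.eigenvectorUnitary : Matrix (Fin n) (Fin n) ℝ) = 1 :=
    (Matrix.mem_unitaryGroup_iff').mp hA.eigenvectorUnitary.2
  have hofReal : (RCLike.ofReal ∘ hA.eigenvalues : Fin n → ℝ) = hA.eigenvalues := by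
    ext i; simp
  have h2 : A.charpoly = ∏ i, (X - C (hA.eigenvalues i)) := by
    conv_lhs => rw [hA.spectral_theorem, Unitary.conjStarAlgAut_apply]
    rw [hofReal, charpoly_mul_conj _ _ _ hV1 hV2, charpoly_diagonal]
  have key : ∏ i, (X - C (d i)) = ∏ i, (X - C (hA.eigenvalues i)) := h1 ▸ h2
  have e1 : Multiset.map (fun i => X - C (d i)) Finset.univ.val
      = Multiset.map (fun a => X - C a) (Multiset.map d Finset.univ.val) :=
    (Multiset.map_map (fun a => X - C a) d Finset.univ.val).symm
  have e2 : Multiset.map (fun i => X - C (hA.eigenvalues i)) Finset.univ.val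
      = Multiset.map (fun a => X - C a) (Multiset.map hA.eigenvalues Finset.univ.val) :=
    (Multiset.map_map (fun a => X - C a) hA.eigenvalues Finset.univ.val).symm
  have r1 : (Finset.univ.val.map d) = (∏ i, (X - C (d i))).roots := by
    rw [Finset.prod_eq_multiset_prod, e1, Polynomial.roots_multiset_prod_X_sub_C]
  have r2 : (Finset.univ.val.map hA.eigenvalues) = (∏ i, (X - C (hA.eigenvalues i))).roots := by
    rw [Finset.prod_eq_multiset_prod, e2, Polynomial.roots_multiset_prod_X_sub_C]
  rw [r1, r2, key]

lemma sum_comp_eigenvalues {A : Matrix (Fin n) (Fin n) ℝ} (hA : A.IsHermitian)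
    (U : Matrix (Fin n) (Fin n) ℝ) (hU : U ∈ Matrix.unitaryGroup (Fin n) ℝ) (d : Fin n → ℝ)
    (hdecomp : A = U * Matrix.diagonal d * star U) (f : ℝ → ℝ) :
    ∑ i, f (hA.eigenvalues i) = ∑ i, f (d i) := by
  have h := eigenvalues_multiset hA U hU d hdecomp
  have e1 : Multiset.map (fun i => f (hA.eigenvalues i)) Finset.univ.val
      = Multiset.map f (Multiset.map hA.eigenvalues Finset.univ.val) :=
    (Multiset.map_map f hA.eigenvalues Finset.univ.val).symm
  have e2 : Multiset.map (fun i => f (d i)) Finset.univ.val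
      = Multiset.map f (Multiset.map d Finset.univ.val) :=
    (Multiset.map_map f d Finset.univ.val).symm
  rw [Finset.sum_eq_multiset_sum, Finset.sum_eq_multiset_sum, e1, e2, h]

lemma herm_transpose_eq {A : Matrix (Fin n) (Fin n) ℝ} (hA : A.IsHermitian) : Aᵀ = A := by
  rw [← conjTranspose_eq_transpose_of_trivial]; exact hA

lemma sq_decomp {A : Matrix (Fin n) (Fin n) ℝ} (hA : A.IsHermitian) :
    Aᵀ * A = (hA.eigenvectorUnitary : Matrix (Fin n) (Fin n) ℝ)
      * Matrix.diagonal (fun i => hA.eigenvalues i ^ 2)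
      * star (hA.eigenvectorUnitary : Matrix (Fin n) (Fin n) ℝ) := by
  have hV2 : star (hA.eigenvectorUnitary : Matrix (Fin n) (Fin n) ℝ) * (hA.eigenvectorUnitary : Matrix (Fin n) (Fin n) ℝ) = 1 :=
    (Matrix.mem_unitaryGroup_iff').mp hA.eigenvectorUnitary.2
  have hofReal : (RCLike.ofReal ∘ hA.eigenvalues : Fin n → ℝ) = hA.eigenvalues := by
    ext i; simp
  rw [herm_transpose_eq hA]
  conv_lhs => rw [hA.spectral_theorem, Unitary.conjStarAlgAut_apply, hofReal]
  set U := (hA.eigenvectorUnitary : Matrix (Fin n) (Fin n) ℝ)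
  set D := Matrix.diagonal hA.eigenvalues
  have : U * D * star U * (U * D * star U) = U * (D * (star U * U) * D) * star U := by
    noncomm_ring
  rw [this, hV2, mul_one, diagonal_mul_diagonal]
  have heq : (fun i => hA.eigenvalues i * hA.eigenvalues i) = fun i => hA.eigenvalues i ^ 2 := by
    ext i; ring
  rw [heq]

lemma nucNorm_isHermitian {A : Matrix (Fin n) (Fin n) ℝ} (hA : A.IsHermitian) :
    nucNorm A = ∑ i, |hA.eigenvalues i| := by
  unfold nucNorm
  rw [sum_comp_eigenvalues (Matrix.isHermitian_conjTranspose_mul_self A)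
    (hA.eigenvectorUnitary : Matrix (Fin n) (Fin n) ℝ) hA.eigenvectorUnitary.2
    (fun i => hA.eigenvalues i ^ 2) (sq_decomp hA) Real.sqrt]
  exact Finset.sum_congr rfl fun i _ => Real.sqrt_sq_eq_abs _

lemma trace_eq_sum_eigenvalues {A : Matrix (Fin n) (Fin n) ℝ} (hA : A.IsHermitian) :
    A.trace = ∑ i, hA.eigenvalues i := by
  have hV2 : star (hA.eigenvectorUnitary : Matrix (Fin n) (Fin n) ℝ) * (hA.eigenvectorUnitary : Matrix (Fin n) (Fin n) ℝ) = 1 :=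
    (Matrix.mem_unitaryGroup_iff').mp hA.eigenvectorUnitary.2
  have hofReal : (RCLike.ofReal ∘ hA.eigenvalues : Fin n → ℝ) = hA.eigenvalues := by
    ext i; simp
  conv_lhs => rw [hA.spectral_theorem, Unitary.conjStarAlgAut_apply, hofReal]
  rw [Matrix.trace_mul_cycle, hV2, one_mul, trace_diagonal]

lemma nucNorm_posSemidef {A : Matrix (Fin n) (Fin n) ℝ} (hA : A.PosSemidef) :
    nucNorm A = A.trace := by
  rw [nucNorm_isHermitian hA.1, trace_eq_sum_eigenvalues hA.1]
  exact Finset.sum_congr rfl fun i _ => abs_of_nonneg (hA.eigenvalues_nonneg i)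

lemma posSemidef_trace_zero {A : Matrix (Fin n) (Fin n) ℝ} (hA : A.PosSemidef)
    (h : A.trace = 0) : A = 0 := by
  have hsum : ∑ i, hA.1.eigenvalues i = 0 := by rw [← trace_eq_sum_eigenvalues hA.1, h]
  have hzero : ∀ i ∈ Finset.univ, hA.1.eigenvalues i = 0 :=
    (Finset.sum_eq_zero_iff_of_nonneg (fun i _ => hA.eigenvalues_nonneg i)).mp hsum
  have hofReal : (RCLike.ofReal ∘ hA.1.eigenvalues : Fin n → ℝ) = hA.1.eigenvalues := by
    ext i; simp
  have : Matrix.diagonal hA.1.eigenvalues = 0 := by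
    ext i j
    rcases eq_or_ne i j with rfl | hij
    · simp [hzero i (Finset.mem_univ i)]
    · simp [diagonal_apply_ne _ hij]
  conv_lhs => rw [hA.1.spectral_theorem, Unitary.conjStarAlgAut_apply, hofReal, this]
  simp

lemma abs_quadform_le (D : Matrix (Fin n) (Fin n) ℝ) (u : Fin n → ℝ) :
    |u ⬝ᵥ D.mulVec u| ≤ opNorm D * ∑ j, u j ^ 2 := by
  set T := LinearMap.toContinuousLinearMap (Matrix.toEuclideanLin D)
  set v : EuclideanSpace ℝ (Fin n) := (WithLp.equiv 2 (Fin n → ℝ)).symm u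
  have hTv : T v = (WithLp.equiv 2 (Fin n → ℝ)).symm (D.mulVec u) := by
    simp [T, v, Matrix.toEuclideanLin_apply]
  have hinner : u ⬝ᵥ D.mulVec u = ⟪v, T v⟫ := by
    rw [hTv]
    simp [v, PiLp.inner_apply, dotProduct, mulVec, RCLike.inner_apply]
    exact Finset.sum_congr rfl fun _ _ => mul_comm _ _
  have hnorm : ⟪v, v⟫ = ∑ j, u j ^ 2 := by
    rw [PiLp.inner_apply]
    simp [v, pow_two]
  have h1 : |⟪v, T v⟫| ≤ ‖v‖ * ‖T v‖ := abs_real_inner_le_norm v (T v)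
  have h2 : ‖T v‖ ≤ ‖T‖ * ‖v‖ := T.le_opNorm v
  have h3 : ‖v‖ * ‖v‖ = ∑ j, u j ^ 2 := by rw [← real_inner_self_eq_norm_mul_norm, hnorm]
  calc |u ⬝ᵥ D.mulVec u| = |⟪v, T v⟫| := by rw [hinner]
    _ ≤ ‖v‖ * ‖T v‖ := h1
    _ ≤ ‖v‖ * (‖T‖ * ‖v‖) := by
        exact mul_le_mul_of_nonneg_left h2 (norm_nonneg v)
    _ = ‖T‖ * (‖v‖ * ‖v‖) := by ring
    _ = opNorm D * ∑ j, u j ^ 2 := by rw [h3]; rfl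

lemma opNorm_nonneg (D : Matrix (Fin n) (Fin n) ℝ) : 0 ≤ opNorm D := norm_nonneg _

lemma eq_zero_of_opNorm_eq_zero {D : Matrix (Fin n) (Fin n) ℝ} (h : opNorm D = 0) : D = 0 := by
  have : LinearMap.toContinuousLinearMap (Matrix.toEuclideanLin D) = 0 := by
    rwa [← norm_eq_zero]
  have h2 : Matrix.toEuclideanLin D = 0 :=
    LinearMap.toContinuousLinearMap.injective (this.trans (map_zero _).symm)
  exact Matrix.toEuclideanLin.injective (h2.trans (map_zero _).symm)

lemma holder_trace {C : Matrix (Fin n) (Fin n) ℝ} (hC : C.IsHermitian)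
    (D : Matrix (Fin n) (Fin n) ℝ) :
    |(C * D).trace| ≤ nucNorm C * opNorm D := by
  set U := (hC.eigenvectorUnitary : Matrix (Fin n) (Fin n) ℝ) with hU
  have hV2 : star U * U = 1 := (Matrix.mem_unitaryGroup_iff').mp hC.eigenvectorUnitary.2
  have hofReal : (RCLike.ofReal ∘ hC.eigenvalues : Fin n → ℝ) = hC.eigenvalues := by
    ext i; simp
  have hcols : ∀ i, ∑ k, (U k i) ^ 2 = 1 := by
    intro i
    have := congrFun (congrFun hV2 i) i
    simpa [mul_apply, conjTranspose_apply, pow_two] using this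
  have htrace : (C * D).trace = ∑ i, hC.eigenvalues i * ((fun k => U k i) ⬝ᵥ D.mulVec (fun k => U k i)) := by
    conv_lhs => rw [hC.spectral_theorem, Unitary.conjStarAlgAut_apply, hofReal]
    have assoc : U * Matrix.diagonal hC.eigenvalues * star U * D
        = U * (Matrix.diagonal hC.eigenvalues * (star U * D)) := by noncomm_ring
    rw [assoc, Matrix.trace_mul_comm, mul_assoc]
    have tdiag : (Matrix.diagonal hC.eigenvalues * (star U * D * U)).trace
        = ∑ i, hC.eigenvalues i * (star U * D * U) i i := by
      simp [Matrix.trace, Matrix.diagonal_mul]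
    rw [tdiag]
    apply Finset.sum_congr rfl
    intro i _
    congr 1
    simp only [mul_apply, Matrix.star_apply, conjTranspose_apply, dotProduct, mulVec, star_trivial,
      Finset.sum_mul, Finset.mul_sum]
    rw [Finset.sum_comm]
    apply Finset.sum_congr rfl
    intro k _
    apply Finset.sum_congr rfl
    intro l _
    ring
  rw [htrace, nucNorm_isHermitian hC]
  calc |∑ i, hC.eigenvalues i * ((fun k => U k i) ⬝ᵥ D.mulVec (fun k => U k i))|
      ≤ ∑ i, |hC.eigenvalues i * ((fun k => U k i) ⬝ᵥ D.mulVec (fun k => U k i))| :=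
        Finset.abs_sum_le_sum_abs _ _
    _ ≤ ∑ i, |hC.eigenvalues i| * opNorm D := by
        apply Finset.sum_le_sum
        intro i _
        rw [abs_mul]
        apply mul_le_mul_of_nonneg_left _ (abs_nonneg _)
        calc |(fun k => U k i) ⬝ᵥ D.mulVec (fun k => U k i)|
            ≤ opNorm D * ∑ k, (U k i) ^ 2 := abs_quadform_le D _
          _ = opNorm D := by rw [hcols i, mul_one]
    _ = (∑ i, |hC.eigenvalues i|) * opNorm D := by rw [← Finset.sum_mul]

lemma nucNorm_nonneg (M : Matrix (Fin n) (Fin n) ℝ) : 0 ≤ nucNorm M :=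
  Finset.sum_nonneg fun i _ => Real.sqrt_nonneg _

lemma trace_vecMulVec_mul (a b : Fin n → ℝ) (M : Matrix (Fin n) (Fin n) ℝ) :
    (vecMulVec a b * M).trace = b ⬝ᵥ M.mulVec a := by
  simp only [Matrix.trace, Matrix.diag_apply, mul_apply, vecMulVec_apply, dotProduct, mulVec,
    Finset.mul_sum, Finset.sum_mul]
  rw [Finset.sum_comm]
  apply Finset.sum_congr rfl
  intro k _
  apply Finset.sum_congr rfl
  intro i _
  ring

lemma vecMulVec_eq_mul (a : Fin n → ℝ) (H : Matrix (Fin n) (Fin n) ℝ) :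
    vecMulVec (H.mulVec a) a = H * vecMulVec a a := by
  ext i j
  simp only [vecMulVec_apply, mulVec, mul_apply, dotProduct, Finset.sum_mul]
  apply Finset.sum_congr rfl
  intro k _
  ring

lemma vecMulVec_eq_mul' (a : Fin n → ℝ) (H : Matrix (Fin n) (Fin n) ℝ) (hH : Hᵀ = H) :
    vecMulVec a (H.mulVec a) = vecMulVec a a * H := by
  ext i j
  simp only [vecMulVec_apply, mulVec, mul_apply, dotProduct, Finset.mul_sum]
  apply Finset.sum_congr rfl
  intro k _
  have e : H j k = H k j := congrFun (congrFun hH k) j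
  rw [e]
  ring

lemma vecMulVec_smul_right (c : ℝ) (a b : Fin n → ℝ) :
    vecMulVec a (c • b) = c • vecMulVec a b := by
  ext i j; simp [vecMulVec_apply, mul_comm, mul_assoc, mul_left_comm]

lemma vecMulVec_smul_left (c : ℝ) (a b : Fin n → ℝ) :
    vecMulVec (c • a) b = c • vecMulVec a b := by
  ext i j; simp [vecMulVec_apply]; ring

lemma vecMulVec_sub_right (a b c : Fin n → ℝ) :
    vecMulVec a (b - c) = vecMulVec a b - vecMulVec a c := by
  ext i j; simp [vecMulVec_apply]; ring

lemma vecMulVec_sub_left (a b c : Fin n → ℝ) :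
    vecMulVec (a - b) c = vecMulVec a c - vecMulVec b c := by
  ext i j; simp [vecMulVec_apply]; ring

lemma PmulP {x0 : Fin n → ℝ} (hx0 : ∑ i, (x0 i) ^ 2 = 1) :
    vecMulVec x0 x0 * vecMulVec x0 x0 = vecMulVec x0 x0 := by
  ext i j
  simp only [mul_apply, vecMulVec_apply]
  calc ∑ k, x0 i * x0 k * (x0 k * x0 j) = (∑ k, x0 k ^ 2) * (x0 i * x0 j) := by
        rw [Finset.sum_mul]
        apply Finset.sum_congr rfl
        intro k _
        ring
    _ = x0 i * x0 j := by rw [hx0, one_mul]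

lemma Pmulvec {x0 : Fin n → ℝ} (hx0 : ∑ i, (x0 i) ^ 2 = 1) :
    (vecMulVec x0 x0).mulVec x0 = x0 := by
  ext i
  simp only [mulVec, dotProduct, vecMulVec_apply]
  calc ∑ k, x0 i * x0 k * x0 k = x0 i * ∑ k, x0 k ^ 2 := by
        rw [Finset.mul_sum]
        apply Finset.sum_congr rfl
        intro k _
        ring
    _ = x0 i := by rw [hx0, mul_one]

lemma PHP {x0 : Fin n → ℝ} (H : Matrix (Fin n) (Fin n) ℝ) :
    vecMulVec x0 x0 * H * vecMulVec x0 x0 = (x0 ⬝ᵥ H.mulVec x0) • vecMulVec x0 x0 := by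
  ext i j
  simp only [mul_apply, vecMulVec_apply, Matrix.smul_apply, dotProduct, mulVec, smul_eq_mul,
    Finset.sum_mul, Finset.mul_sum]
  rw [Finset.sum_comm]
  apply Finset.sum_congr rfl
  intro k _
  apply Finset.sum_congr rfl
  intro l _
  ring

lemma vecMulVec_transpose' (a b : Fin n → ℝ) : (vecMulVec a b)ᵀ = vecMulVec b a := by
  ext i j; simp [vecMulVec_apply]; ring


/-- Central lemma: `ℓ¹`-isometry bounds plus an inexact dual certificate imply that
`X₀ = x₀x₀ᵀ` is the unique positive semidefinite solution of `A(X) = A(X₀)`. -/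
theorem inexact_dual_certificate_uniqueness (n m : ℕ) (z : Fin m → Fin n → ℝ)
    (x0 : Fin n → ℝ) (hx0 : ∑ i, (x0 i) ^ 2 = 1) (δ : ℝ) (hδ0 : 0 ≤ δ) (hδ : δ ≤ 1 / 9)
    (h1 : ∀ X : Matrix (Fin n) (Fin n) ℝ, X.PosSemidef →
      (1 / (m : ℝ)) * ∑ i, |z i ⬝ᵥ X.mulVec (z i)| ≤ (1 + δ) * nucNorm X)
    (h2 : ∀ y : Fin n → ℝ,
      0.94 * (1 - δ) * opNorm (vecMulVec x0 y + vecMulVec y x0) ≤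
        (1 / (m : ℝ)) * ∑ i, |z i ⬝ᵥ (vecMulVec x0 y + vecMulVec y x0).mulVec (z i)|)
    (lam : Fin m → ℝ)
    (hYT : nucNorm (TProj x0 (∑ i, lam i • vecMulVec (z i) (z i))) ≤ 1 / 2)
    (hYTperp : ∀ u : Fin n → ℝ, u ⬝ᵥ x0 = 0 →
      ∑ j, (u j) ^ 2 ≤ u ⬝ᵥ (∑ i, lam i • vecMulVec (z i) (z i)).mulVec u) :
    ∀ X : Matrix (Fin n) (Fin n) ℝ, X.PosSemidef →
      (fun i => z i ⬝ᵥ X.mulVec (z i)) = (fun i => z i ⬝ᵥ (vecMulVec x0 x0).mulVec (z i)) →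
      X = vecMulVec x0 x0 := by
  intro X hX hAX
  set P := vecMulVec x0 x0 with hPdef
  have hPP : P * P = P := PmulP hx0
  have hPt : Pᵀ = P := vecMulVec_transpose' x0 x0
  set Q : Matrix (Fin n) (Fin n) ℝ := 1 - P with hQdef
  have hQt : Qᵀ = Q := by rw [hQdef, transpose_sub, transpose_one, hPt]
  have hQQ : Q * Q = Q := by
    have e : Q * Q = 1 - P - (P - P * P) := by rw [hQdef]; noncomm_ring
    rw [e, hPP, sub_self, sub_zero, hQdef]
  have hQP : Q * P = 0 := by rw [hQdef, sub_mul, one_mul, hPP, sub_self]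
  have hXsymm : Xᵀ = X := by
    rw [← conjTranspose_eq_transpose_of_trivial]; exact hX.1
  set H := X - P with hHdef
  have hHsymm : Hᵀ = H := by rw [hHdef, transpose_sub, hXsymm, hPt]
  have hAH : ∀ i, z i ⬝ᵥ H.mulVec (z i) = 0 := by
    intro i
    have hi := congrFun hAX i
    rw [hHdef, sub_mulVec, dotProduct_sub, hi, sub_self]
  set Hperp := Q * H * Q with hHperpdef
  have hHperpX : Hperp = Q * X * Q := by
    have e : Q * (X - P) * Q = Q * X * Q - Q * P * Q := by noncomm_ring
    rw [hHperpdef, hHdef, e, hQP, zero_mul, sub_zero]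
  have hHperpPSD : Hperp.PosSemidef := by
    rw [hHperpX]
    have h3 := hX.mul_mul_conjTranspose_same Q
    rwa [conjTranspose_eq_transpose_of_trivial, hQt] at h3
  set HT := H - Hperp with hHTdef
  set c := x0 ⬝ᵥ H.mulVec x0 with hcdef
  set y0 := H.mulVec x0 - (c / 2) • x0 with hy0def
  have hHTform : HT = vecMulVec x0 y0 + vecMulVec y0 x0 := by
    have expand : Q * H * Q = H - P * H - H * P + P * H * P := by rw [hQdef]; noncomm_ring
    have hPH : vecMulVec x0 y0 = P * H - (c / 2) • P := by
      rw [hy0def, vecMulVec_sub_right, vecMulVec_eq_mul' x0 H hHsymm, vecMulVec_smul_right]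
    have hHP : vecMulVec y0 x0 = H * P - (c / 2) • P := by
      rw [hy0def, vecMulVec_sub_left, vecMulVec_eq_mul, vecMulVec_smul_left]
    rw [hHTdef, hHperpdef, expand, hPH, hHP, PHP, ← hcdef, ← hPdef]
    module
  set Y := ∑ i, lam i • vecMulVec (z i) (z i) with hYdef
  have hYt : Yᵀ = Y := by
    rw [hYdef, transpose_sum]
    apply Finset.sum_congr rfl
    intro i _
    rw [transpose_smul, vecMulVec_transpose']
  have htraceY : ∀ M : Matrix (Fin n) (Fin n) ℝ,
      (Y * M).trace = ∑ i, lam i * (z i ⬝ᵥ M.mulVec (z i)) := by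
    intro M
    rw [hYdef, Finset.sum_mul, trace_sum]
    apply Finset.sum_congr rfl
    intro i _
    rw [smul_mul_assoc, trace_smul, trace_vecMulVec_mul, smul_eq_mul]
  have hYH0 : (Y * H).trace = 0 := by
    rw [htraceY]
    exact Finset.sum_eq_zero fun i _ => by rw [hAH i, mul_zero]
  -- the T-projection of Y
  have hYTproj : TProj x0 Y = Y - Q * Y * Q := rfl
  have hYTsymm : (TProj x0 Y).IsHermitian := by
    rw [Matrix.IsHermitian, conjTranspose_eq_transpose_of_trivial, hYTproj, transpose_sub,
      hYt, transpose_mul, transpose_mul, hQt, hYt, mul_assoc]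
  have hQHTQ : Q * HT * Q = 0 := by
    have e : Q * (H - Q * H * Q) * Q = Q * H * Q - (Q * Q) * H * (Q * Q) := by noncomm_ring
    rw [hHTdef, hHperpdef, e, hQQ, sub_self]
  have htraceYT : (Y * HT).trace = ((TProj x0 Y) * HT).trace := by
    rw [hYTproj, sub_mul, trace_sub]
    have e : Q * Y * Q * HT = Q * (Y * (Q * HT)) := by noncomm_ring
    have e2 : Y * (Q * HT) * Q = Y * (Q * HT * Q) := by noncomm_ring
    have e3 : (Q * (Y * (Q * HT))).trace = (Y * (Q * HT) * Q).trace :=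
      Matrix.trace_mul_comm Q (Y * (Q * HT))
    rw [e, e3, e2, hQHTQ, mul_zero, trace_zero, sub_zero]
  have hG : |((TProj x0 Y) * HT).trace| ≤ 1 / 2 * opNorm HT :=
    le_trans (holder_trace hYTsymm HT)
      (mul_le_mul_of_nonneg_right hYT (opNorm_nonneg HT))
  -- lower bound for trace (Y * Hperp)
  set S := CFC.sqrt X with hSdef
  have hSsym : Sᵀ = S := by
    rw [← conjTranspose_eq_transpose_of_trivial]; exact (CFC.sqrt_nonneg X).posSemidef.1
  have hSS : S * S = X := CFC.sqrt_mul_sqrt_self X hX.nonneg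
  set B := S * Q with hBdef
  have hBt : Bᵀ = Q * S := by rw [hBdef, transpose_mul, hQt, hSsym]
  have hBB : Bᵀ * B = Hperp := by
    have e : (Q * S) * (S * Q) = Q * (S * S) * Q := by noncomm_ring
    rw [hBt, hBdef, e, hSS, ← hHperpX]
  have hQx : Q.mulVec x0 = 0 := by
    rw [hQdef, sub_mulVec, one_mulVec, Pmulvec hx0, sub_self]
  have hBx : B.mulVec x0 = 0 := by
    rw [hBdef, ← mulVec_mulVec, hQx, mulVec_zero]
  have hrow : ∀ j, (fun k => B j k) ⬝ᵥ x0 = 0 := by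
    intro j
    have := congrFun hBx j
    simpa [mulVec, dotProduct] using this
  have hYHp : Hperp.trace ≤ (Y * Hperp).trace := by
    have h5 : (Y * Hperp).trace = ((B * Y) * Bᵀ).trace := by
      rw [← hBB, Matrix.trace_mul_comm, mul_assoc, Matrix.trace_mul_comm]
    have h6 : ((B * Y) * Bᵀ).trace = ∑ j, (fun k => B j k) ⬝ᵥ Y.mulVec (fun k => B j k) := by
      simp only [Matrix.trace, diag_apply, mul_apply, transpose_apply, dotProduct, mulVec,
        Finset.sum_mul, Finset.mul_sum]
      apply Finset.sum_congr rfl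
      intro j _
      rw [Finset.sum_comm]
      apply Finset.sum_congr rfl
      intro k _
      apply Finset.sum_congr rfl
      intro l _
      ring
    have h7 : Hperp.trace = ∑ j, ∑ k, (B j k) ^ 2 := by
      rw [← hBB]
      simp only [Matrix.trace, diag_apply, mul_apply, transpose_apply, pow_two]
      rw [Finset.sum_comm]
    rw [h5, h6, h7]
    exact Finset.sum_le_sum fun j _ => hYTperp _ (hrow j)
  -- arithmetic conclusion
  set s := opNorm HT with hsdef
  set t := Hperp.trace with htdef
  have hs0 : 0 ≤ s := opNorm_nonneg HT
  have ht_nuc : nucNorm Hperp = t := nucNorm_posSemidef hHperpPSD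
  have ht0 : 0 ≤ t := ht_nuc ▸ nucNorm_nonneg Hperp
  have hB2 : 0.94 * (1 - δ) * s ≤ (1 / (m : ℝ)) * ∑ i, |z i ⬝ᵥ HT.mulVec (z i)| := by
    have h8 := h2 y0
    rwa [← hHTform] at h8
  have hsum_eq : ∑ i, |z i ⬝ᵥ HT.mulVec (z i)| = ∑ i, |z i ⬝ᵥ Hperp.mulVec (z i)| := by
    apply Finset.sum_congr rfl
    intro i _
    have h7 : z i ⬝ᵥ HT.mulVec (z i) + z i ⬝ᵥ Hperp.mulVec (z i) = 0 := by
      rw [← dotProduct_add, ← Matrix.add_mulVec, hHTdef, sub_add_cancel, hAH i]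
    have h8 : z i ⬝ᵥ HT.mulVec (z i) = -(z i ⬝ᵥ Hperp.mulVec (z i)) := by linarith
    rw [h8, abs_neg]
  have hC : (1 / (m : ℝ)) * ∑ i, |z i ⬝ᵥ Hperp.mulVec (z i)| ≤ (1 + δ) * t := by
    have h9 := h1 Hperp hHperpPSD
    rwa [ht_nuc] at h9
  have hsplit : (Y * HT).trace + (Y * Hperp).trace = 0 := by
    rw [← trace_add, ← mul_add, hHTdef, sub_add_cancel, hYH0]
  have hYHT_ge : -(1 / 2 * s) ≤ (Y * HT).trace := by
    rw [htraceYT]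
    calc -(1 / 2 * s) ≤ -|((TProj x0 Y) * HT).trace| := by
          exact neg_le_neg hG
      _ ≤ ((TProj x0 Y) * HT).trace := neg_abs_le _
  have hts : t ≤ 1 / 2 * s := by linarith
  have hmain : 0.94 * (1 - δ) * s ≤ (1 + δ) * t := by
    calc 0.94 * (1 - δ) * s ≤ (1 / (m : ℝ)) * ∑ i, |z i ⬝ᵥ HT.mulVec (z i)| := hB2
      _ = (1 / (m : ℝ)) * ∑ i, |z i ⬝ᵥ Hperp.mulVec (z i)| := by rw [hsum_eq]
      _ ≤ (1 + δ) * t := hC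
  have hs_le : s ≤ 0 := by nlinarith
  have hs_eq : s = 0 := le_antisymm hs_le hs0
  have hHT0 : HT = 0 := eq_zero_of_opNorm_eq_zero hs_eq
  have ht_le : t ≤ 0 := by rw [hs_eq] at hts; linarith
  have ht_eq : t = 0 := le_antisymm ht_le ht0
  have hHperp0 : Hperp = 0 := posSemidef_trace_zero hHperpPSD ht_eq
  have hH0 : H = 0 := by
    have := hHTdef ▸ hHT0
    rw [hHperp0, sub_zero] at this
    exact this
  rw [hHdef] at hH0
  exact sub_eq_zero.mp hH0
end

section
/- Under the hypotheses of the central lemma (the two ℓ1-isometry bounds with δ ≤ 1/9 and existence of Ȳ with ||Ȳ_T||_1 ≤ 1/2, Ȳ_{T^⊥} ⪰ I_{T^⊥}), every feasible difference H = X − X_0 with X ⪰ 0 and A(X)=A(X_0) satisfies the cone condition ||H_{T^⊥}||_1 ≥ (0.94(1−δ)/(1+δ)) ||H_T||_op. -/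
open Matrix

/-- Cone condition: under the hypotheses of the central lemma, every feasible
difference `H = X − X₀` satisfies `‖H_{T^⊥}‖₁ ≥ (0.94(1−δ)/(1+δ)) ‖H_T‖_op`. -/
theorem feasible_difference_cone_condition (n m : ℕ) (z : Fin m → Fin n → ℝ)
    (x0 : Fin n → ℝ) (hx0 : ∑ i, (x0 i) ^ 2 = 1) (δ : ℝ) (hδ0 : 0 ≤ δ) (hδ : δ ≤ 1 / 9)
    (h1 : ∀ X : Matrix (Fin n) (Fin n) ℝ, X.PosSemidef →
      (1 / (m : ℝ)) * ∑ i, |z i ⬝ᵥ X.mulVec (z i)| ≤ (1 + δ) * nucNorm X)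
    (h2 : ∀ y : Fin n → ℝ,
      0.94 * (1 - δ) * opNorm (vecMulVec x0 y + vecMulVec y x0) ≤
        (1 / (m : ℝ)) * ∑ i, |z i ⬝ᵥ (vecMulVec x0 y + vecMulVec y x0).mulVec (z i)|)
    (lam : Fin m → ℝ)
    (hYT : nucNorm (TProj x0 (∑ i, lam i • vecMulVec (z i) (z i))) ≤ 1 / 2)
    (hYTperp : ∀ u : Fin n → ℝ, u ⬝ᵥ x0 = 0 →
      ∑ j, (u j) ^ 2 ≤ u ⬝ᵥ (∑ i, lam i • vecMulVec (z i) (z i)).mulVec u)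
    (X : Matrix (Fin n) (Fin n) ℝ) (hX : X.PosSemidef)
    (hfeas : (fun i => z i ⬝ᵥ X.mulVec (z i)) =
      (fun i => z i ⬝ᵥ (vecMulVec x0 x0).mulVec (z i))) :
    0.94 * (1 - δ) / (1 + δ) * opNorm (TProj x0 (X - vecMulVec x0 x0)) ≤
      nucNorm (TperpProj x0 (X - vecMulVec x0 x0)) := by
  classical
  set P : Matrix (Fin n) (Fin n) ℝ := vecMulVec x0 x0 with hPdef
  set H : Matrix (Fin n) (Fin n) ℝ := X - P with hHdef
  have hPP : P * P = P := by
    ext i j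
    simp only [hPdef, mul_apply, vecMulVec_apply]
    have : ∀ k, x0 i * x0 k * (x0 k * x0 j) = (x0 i * x0 j) * (x0 k) ^ 2 := by
      intro k; ring
    rw [Finset.sum_congr rfl (fun k _ => this k), ← Finset.mul_sum, hx0, mul_one]
  have hXs : ∀ a b, X a b = X b a := by
    intro a b
    conv_lhs => rw [← hX.1]
    simp [conjTranspose_apply]
  have hsym : ∀ a b, H a b = H b a := by
    intro a b
    simp only [hHdef, Matrix.sub_apply, hPdef, vecMulVec_apply]
    rw [hXs a b]; ring
  -- the vector y such that H_T = x0 yᵀ + y x0ᵀ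
  set s : Fin n → ℝ := fun a => ∑ k, H a k * x0 k with hsdef
  set c : ℝ := ∑ l, x0 l * s l with hcdef
  set y : Fin n → ℝ := fun a => s a - c / 2 * x0 a with hydef
  have hPsymm : Pᴴ = P := by
    ext i j
    simp [hPdef, conjTranspose_apply, vecMulVec_apply, mul_comm]
  -- H_{T⊥} = (1-P) X (1-P) is PSD
  have hzero : (1 - P) * P = 0 := by rw [sub_mul, one_mul, hPP, sub_self]
  have hTperpX : TperpProj x0 H = (1 - P) * X * (1 - P) := by
    have h : (1 - P) * (X - P) = (1 - P) * X := by rw [mul_sub, hzero, sub_zero]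
    show (1 - P) * (X - P) * (1 - P) = _
    rw [h]
  have hQsymm : (1 - P)ᴴ = 1 - P := by rw [conjTranspose_sub, conjTranspose_one, hPsymm]
  have hPSD : (TperpProj x0 H).PosSemidef := by
    rw [hTperpX]
    have := hX.mul_mul_conjTranspose_same (1 - P)
    rwa [hQsymm] at this
  -- H_T = x0 yᵀ + y x0ᵀ
  have hTform : TProj x0 H = P * H + H * P - P * H * P := by
    show H - (1 - P) * H * (1 - P) = _
    noncomm_ring
  have e1 : ∀ a b, ∑ k, (x0 a * x0 k) * H k b = x0 a * s b := by
    intro a b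
    rw [Finset.mul_sum]
    refine Finset.sum_congr rfl fun k _ => ?_
    rw [hsym k b]; ring
  have hTeq : TProj x0 H = vecMulVec x0 y + vecMulVec y x0 := by
    rw [hTform]
    ext i j
    simp only [Matrix.add_apply, Matrix.sub_apply, mul_apply, hPdef, vecMulVec_apply, hydef]
    have t1 : ∑ k, (x0 i * x0 k) * H k j = x0 i * s j := e1 i j
    have t2 : ∑ k, H i k * (x0 k * x0 j) = s i * x0 j := by
      rw [Finset.sum_mul]
      refine Finset.sum_congr rfl fun k _ => ?_
      ring
    have t3 : ∑ l, (∑ k, (x0 i * x0 k) * H k l) * (x0 l * x0 j)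
        = x0 i * x0 j * c := by
      rw [hcdef, Finset.mul_sum]
      refine Finset.sum_congr rfl fun l _ => ?_
      rw [e1 i l]; ring
    rw [t1, t2, t3]
    ring
  -- A(H) = 0
  have hA0 : ∀ i, z i ⬝ᵥ H.mulVec (z i) = 0 := by
    intro i
    have := congrFun hfeas i
    simp only [hHdef, hPdef, sub_mulVec, dotProduct_sub, this, sub_self]
  -- A(H_T) = -A(H_{T⊥})
  have hAeq : ∀ i, z i ⬝ᵥ (TProj x0 H).mulVec (z i)
      = -(z i ⬝ᵥ (TperpProj x0 H).mulVec (z i)) := by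
    intro i
    show z i ⬝ᵥ (H - TperpProj x0 H).mulVec (z i) = _
    rw [sub_mulVec, dotProduct_sub, hA0 i, zero_sub]
  have hsums : ∑ i, |z i ⬝ᵥ (TProj x0 H).mulVec (z i)|
      = ∑ i, |z i ⬝ᵥ (TperpProj x0 H).mulVec (z i)| := by
    refine Finset.sum_congr rfl fun i _ => ?_
    rw [hAeq i, abs_neg]
  have key1 : 0.94 * (1 - δ) * opNorm (TProj x0 H)
      ≤ (1 / (m : ℝ)) * ∑ i, |z i ⬝ᵥ (TProj x0 H).mulVec (z i)| := by
    rw [hTeq]; exact h2 y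
  have key2 := h1 (TperpProj x0 H) hPSD
  have hpos : (0 : ℝ) < 1 + δ := by linarith
  rw [div_mul_eq_mul_div, div_le_iff₀ hpos]
  rw [hsums] at key1
  linarith [key1, key2, mul_comm (1 + δ) (nucNorm (TperpProj x0 H))]
end

section
/- Let z be a standard Gaussian vector in R^n and u a unit vector orthogonal to e_1. For the random variable η = −(z_1^2 − 1)⟨z, u⟩^2 restricted to the event E = {|z_1| ≤ √(2β log n)} ∩ {||z||_2 ≤ √(3n)}, one has for every integer k ≥ 2: E[|η 1_E|^k] ≤ 2(2β log n)^{k−2} · 2^k k!. -/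
open MeasureTheory ProbabilityTheory
open scoped NNReal ENNReal Nat


noncomputable def γ : Measure ℝ := gaussianReal 0 1

instance : IsProbabilityMeasure γ := by unfold γ; infer_instance

lemma int_pow_exp (p : ℕ) : Integrable (fun x : ℝ => x ^ p * Real.exp (-(1/2) * x ^ 2)) := by
  simpa [Real.rpow_natCast] using
    integrable_rpow_mul_exp_neg_mul_sq (b := 1/2) (by norm_num) (s := (p : ℝ))
      (lt_of_lt_of_le neg_one_lt_zero (Nat.cast_nonneg p))

lemma pdf01 (x : ℝ) : gaussianPDFReal 0 1 x = (Real.sqrt (2 * Real.pi))⁻¹ * Real.exp (-(1/2) * x ^ 2) := by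
  rw [gaussianPDFReal]
  simp only [NNReal.coe_one, mul_one, sub_zero]
  ring_nf

lemma integral_gauss_eq (f : ℝ → ℝ) :
    ∫ x, f x ∂γ = ∫ x, gaussianPDFReal 0 1 x * f x := by
  rw [γ, gaussianReal_of_var_ne_zero _ one_ne_zero]
  have h : (gaussianPDF 0 1) = fun x => ((Real.toNNReal (gaussianPDFReal 0 1 x) : ℝ≥0) : ℝ≥0∞) := rfl
  rw [h, integral_withDensity_eq_integral_smul ((measurable_gaussianPDFReal 0 1).real_toNNReal) f]
  congr 1
  ext x
  simp [NNReal.smul_def, Real.coe_toNNReal _ (gaussianPDFReal_nonneg 0 1 x)]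

lemma integrable_gauss_iff (f : ℝ → ℝ) :
    Integrable f γ ↔ Integrable (fun x => gaussianPDFReal 0 1 x * f x) := by
  rw [γ, gaussianReal_of_var_ne_zero _ one_ne_zero]
  have h : (gaussianPDF 0 1) = fun x => ((Real.toNNReal (gaussianPDFReal 0 1 x) : ℝ≥0) : ℝ≥0∞) := rfl
  rw [h, integrable_withDensity_iff_integrable_smul ((measurable_gaussianPDFReal 0 1).real_toNNReal)]
  constructor <;> intro hh <;>
  · apply hh.congr
    filter_upwards with x
    simp [NNReal.smul_def, Real.coe_toNNReal _ (gaussianPDFReal_nonneg 0 1 x)]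


lemma int_pow_gauss (p : ℕ) : Integrable (fun x : ℝ => x ^ p) γ := by
  rw [integrable_gauss_iff]
  have := ((int_pow_exp p).const_mul ((Real.sqrt (2 * Real.pi))⁻¹))
  apply this.congr
  filter_upwards with x
  rw [pdf01]; ring

lemma ibp (p : ℕ) :
    ∫ x, x ^ (p + 2) ∂γ = (p + 1) * ∫ x, x ^ p ∂γ := by
  set c := (Real.sqrt (2 * Real.pi))⁻¹ with hc
  have hg : ∀ q : ℕ, Integrable (fun x : ℝ => x ^ q * (c * Real.exp (-(1/2) * x ^ 2))) := by
    intro q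
    exact ((int_pow_exp q).const_mul c).congr (by filter_upwards with x; ring)
  have hder : ∀ x : ℝ, HasDerivAt (fun x : ℝ => -(x ^ (p+1) * (c * Real.exp (-(1/2) * x ^ 2))))
      (x ^ (p+2) * (c * Real.exp (-(1/2) * x ^ 2)) - ((p:ℝ)+1) * (x ^ p * (c * Real.exp (-(1/2) * x ^ 2)))) x := by
    intro x
    have h1 : HasDerivAt (fun x : ℝ => x ^ (p+1)) (((p:ℝ)+1) * x ^ p) x := by
      simpa using hasDerivAt_pow (p+1) x
    have h3 : HasDerivAt (fun x : ℝ => -(1/2) * x ^ 2) (-(1/2) * (2*x)) x := by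
      simpa using ((hasDerivAt_pow 2 x).const_mul (-(1/2):ℝ))
    have h2 := h3.exp
    have := (h1.mul ((h2.const_mul c))).neg
    exact this.congr_deriv (by ring)
  have hint : Integrable (fun x : ℝ => x ^ (p+2) * (c * Real.exp (-(1/2) * x ^ 2)) - ((p:ℝ)+1) * (x ^ p * (c * Real.exp (-(1/2) * x ^ 2)))) :=
    (hg (p+2)).sub ((hg p).const_mul _)
  have hf : Integrable (fun x : ℝ => -(x ^ (p+1) * (c * Real.exp (-(1/2) * x ^ 2)))) := (hg (p+1)).neg
  have hz := integral_eq_zero_of_hasDerivAt_of_integrable hder hint hf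
  rw [integral_sub (hg (p+2)) ((hg p).const_mul _), sub_eq_zero] at hz
  rw [integral_gauss_eq, integral_gauss_eq]
  have e1 : ∀ q : ℕ, (∫ x, gaussianPDFReal 0 1 x * x ^ q) = ∫ x, x ^ q * (c * Real.exp (-(1/2) * x ^ 2)) := by
    intro q; congr 1; ext x; rw [pdf01]; ring
  rw [e1, e1, hz, integral_const_mul]

lemma gauss_moment_even (m : ℕ) : ∫ x, x ^ (2 * m) ∂γ = ((2 * m - 1)‼ : ℝ) := by
  induction m with
  | zero => simp
  | succ m ih =>
    have h : 2 * (m + 1) = 2 * m + 2 := by ring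
    rw [h, ibp (2 * m), ih]
    have h3 : (2 * m + 2 - 1)‼ = (2 * m + 1) * (2 * m - 1)‼ := by
      cases m with
      | zero => decide
      | succ m =>
        have h2 : 2 * (m + 1) + 2 - 1 = (2 * (m + 1) - 1) + 2 := by omega
        rw [h2, Nat.doubleFactorial_add_two]
        have h4 : 2 * (m + 1) - 1 + 2 = 2 * (m + 1) + 1 := by omega
        rw [h4]
    rw [h3]
    push_cast
    ring

lemma gauss_moment_odd (m : ℕ) : ∫ x, x ^ (2 * m + 1) ∂γ = 0 := by
  have hmap : γ.map (fun x => (-1 : ℝ) * x) = γ := by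
    rw [γ, gaussianReal_map_const_mul (-1)]
    norm_num
  have h : ∫ x, x ^ (2 * m + 1) ∂(γ.map (fun x => (-1:ℝ) * x))
      = ∫ x, ((-1:ℝ) * x) ^ (2 * m + 1) ∂γ :=
    integral_map (measurable_const_mul (-1)).aemeasurable (by fun_prop)
  rw [hmap] at h
  have h2 : (∫ x, ((-1:ℝ) * x) ^ (2 * m + 1) ∂γ) = -∫ x, x ^ (2 * m + 1) ∂γ := by
    rw [← integral_neg]
    congr 1; ext x
    rw [mul_pow]
    have : ((-1:ℝ)) ^ (2 * m + 1) = -1 := Odd.neg_one_pow ⟨m, by ring⟩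
    rw [this]; ring
  rw [h2] at h
  linarith

lemma dfact_succ (m : ℕ) : (2 * m + 2 - 1)‼ = (2 * m + 1) * (2 * m - 1)‼ := by
  cases m with
  | zero => decide
  | succ m =>
    have h2 : 2 * (m + 1) + 2 - 1 = (2 * (m + 1) - 1) + 2 := by omega
    rw [h2, Nat.doubleFactorial_add_two]
    have h4 : 2 * (m + 1) - 1 + 2 = 2 * (m + 1) + 1 := by omega
    rw [h4]

lemma fact_eq_dfact (r : ℕ) : (2 * r)! = (2 * r - 1)‼ * (2 ^ r * r !) := by
  cases r with
  | zero => decide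
  | succ r =>
    have h : 2 * (r + 1) = (2 * (r + 1) - 1) + 1 := by omega
    rw [h, Nat.factorial_eq_mul_doubleFactorial, ← h, Nat.doubleFactorial_two_mul]
    ring

lemma choose_dfact {r j : ℕ} (h : j ≤ r) :
    (2 * r).choose (2 * j) * (2 * j - 1)‼ * (2 * (r - j) - 1)‼ = (2 * r - 1)‼ * r.choose j := by
  have hpos : 0 < 2 ^ j * j ! * (2 ^ (r - j) * (r - j)!) := by positivity
  apply Nat.eq_of_mul_eq_mul_right hpos
  have e1 : (2 * r).choose (2 * j) * (2 * j - 1)‼ * (2 * (r - j) - 1)‼ *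
      (2 ^ j * j ! * (2 ^ (r - j) * (r - j)!)) =
      (2 * r).choose (2 * j) * ((2 * j - 1)‼ * (2 ^ j * j !)) * ((2 * (r - j) - 1)‼ * (2 ^ (r - j) * (r - j)!)) := by ring
  rw [e1, ← fact_eq_dfact, ← fact_eq_dfact]
  have e2 : 2 * r - 2 * j = 2 * (r - j) := by omega
  have e3 := Nat.choose_mul_factorial_mul_factorial (Nat.mul_le_mul_left 2 h)
  rw [e2] at e3
  rw [← mul_assoc, e3]
  have e4 := Nat.choose_mul_factorial_mul_factorial h
  calc (2 * r)! = (2 * r - 1)‼ * (2 ^ r * r !) := fact_eq_dfact r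
    _ = (2 * r - 1)‼ * (2 ^ r * (r.choose j * j ! * (r - j)!)) := by rw [e4]
    _ = (2 * r - 1)‼ * r.choose j * (2 ^ j * j ! * (2 ^ (r - j) * (r - j)!)) := by
        have hp : (2:ℕ) ^ j * 2 ^ (r - j) = 2 ^ r := by
          rw [← pow_add]; congr 1; omega
        rw [← hp]; ring
    _ = (2 * r - 1)‼ * r.choose j * (2 ^ j * j !) * (2 ^ (r - j) * (r - j)!) := by ring

lemma dfact_le (m : ℕ) : (2 * m - 1)‼ ≤ 2 ^ m * m ! := by
  induction m with
  | zero => decide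
  | succ m ih =>
    have h : 2 * (m + 1) - 1 = 2 * m + 2 - 1 := by omega
    rw [h, dfact_succ]
    calc (2 * m + 1) * (2 * m - 1)‼ ≤ (2 * (m + 1)) * (2 ^ m * m !) :=
          Nat.mul_le_mul (by omega) ih
      _ = 2 ^ (m + 1) * (m + 1)! := by rw [Nat.factorial_succ]; ring

lemma sum_ident (r : ℕ) (a b : ℝ) :
    ∑ j ∈ Finset.range (r + 1),
      ((2 * r).choose (2 * j) : ℝ) * ((2 * j - 1)‼ : ℕ) * ((2 * (r - j) - 1)‼ : ℕ) * a ^ j * b ^ (r - j)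
      = ((2 * r - 1)‼ : ℕ) * (a + b) ^ r := by
  rw [add_pow]
  rw [Finset.mul_sum]
  apply Finset.sum_congr rfl
  intro j hj
  have hjr : j ≤ r := Nat.lt_succ_iff.mp (Finset.mem_range.mp hj)
  have := choose_dfact hjr
  have hc : ((2 * r).choose (2 * j) : ℝ) * ((2 * j - 1)‼ : ℕ) * ((2 * (r - j) - 1)‼ : ℕ)
      = ((2 * r - 1)‼ : ℕ) * (r.choose j : ℝ) := by exact_mod_cast congrArg (Nat.cast : ℕ → ℝ) this
  calc ((2 * r).choose (2 * j) : ℝ) * ((2 * j - 1)‼ : ℕ) * ((2 * (r - j) - 1)‼ : ℕ) * a ^ j * b ^ (r - j)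
      = (((2 * r).choose (2 * j) : ℝ) * ((2 * j - 1)‼ : ℕ) * ((2 * (r - j) - 1)‼ : ℕ)) * (a ^ j * b ^ (r - j)) := by ring
    _ = ((2 * r - 1)‼ : ℕ) * (r.choose j : ℝ) * (a ^ j * b ^ (r - j)) := by rw [hc]
    _ = ((2 * r - 1)‼ : ℕ) * (a ^ j * b ^ (r - j) * (r.choose j : ℝ)) := by ring


lemma key (N : ℕ) (c : Fin N → ℝ) :
    (∀ p : ℕ, Integrable (fun y : Fin N → ℝ => (∑ j, y j * c j) ^ p)
        (Measure.pi fun _ => γ)) ∧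
    (∀ r : ℕ, ∫ y : Fin N → ℝ, (∑ j, y j * c j) ^ (2 * r) ∂(Measure.pi fun _ => γ)
        = ((2 * r - 1)‼ : ℕ) * (∑ j, (c j) ^ 2) ^ r) := by
  induction N with
  | zero =>
    constructor
    · intro p
      simp only [Finset.univ_eq_empty, Finset.sum_empty]
      exact integrable_const _
    · intro r
      simp only [Finset.univ_eq_empty, Finset.sum_empty]
      rw [integral_const]
      cases r with
      | zero => simp
      | succ r => simp [zero_pow]
  | succ N ih =>
    set e := MeasurableEquiv.piFinSuccAbove (fun _ : Fin (N + 1) => ℝ) 0 with he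
    have mp := measurePreserving_piFinSuccAbove (fun _ : Fin (N + 1) => γ) 0
    rw [← he] at mp
    set c' : Fin N → ℝ := fun j => c ((0 : Fin (N + 1)).succAbove j) with hc'
    obtain ⟨ihInt, ihVal⟩ := ih c'
    -- sum decomposition
    have hsum : ∀ z : Fin (N + 1) → ℝ,
        (∑ j, z j * c j) = z 0 * c 0 + ∑ j : Fin N, (e z).2 j * c' j := by
      intro z
      rw [Fin.sum_univ_succAbove (fun j => z j * c j) 0]
      rfl
    have hfst : ∀ z : Fin (N + 1) → ℝ, (e z).1 = z 0 := fun z => rfl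
    -- the pair function
    set g : ℕ → ℝ × (Fin N → ℝ) → ℝ :=
      fun p q => (q.1 * c 0 + ∑ j, q.2 j * c' j) ^ p with hg
    have hcomp : ∀ p (z : Fin (N + 1) → ℝ),
        g p (e z) = (∑ j, z j * c j) ^ p := by
      intro p z
      rw [hsum z]
      rfl
    -- integrability of binomial terms on the product
    have hterm : ∀ i p : ℕ, Integrable
        (fun q : ℝ × (Fin N → ℝ) => (q.1 * c 0) ^ i * (∑ j, q.2 j * c' j) ^ p * ((Nat.choose (i + p) i : ℝ)))
        (γ.prod (Measure.pi fun _ => γ)) := by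
      intro i p
      have h1 : Integrable (fun x : ℝ => (x * c 0) ^ i) γ := by
        have := (int_pow_gauss i).mul_const ((c 0) ^ i)
        apply this.congr
        filter_upwards with x
        rw [mul_pow]
      exact (h1.mul_prod (ihInt p)).mul_const _
    have hIntProd : ∀ p : ℕ, Integrable (g p) (γ.prod (Measure.pi fun _ => γ)) := by
      intro p
      have : g p = fun q => ∑ i ∈ Finset.range (p + 1),
          (q.1 * c 0) ^ i * (∑ j, q.2 j * c' j) ^ (p - i) * ((Nat.choose p i : ℝ)) := by
        funext q
        show (q.1 * c 0 + ∑ j, q.2 j * c' j) ^ p = _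
        rw [add_pow]
      rw [this]
      apply integrable_finset_sum
      intro i hi
      have hip : i + (p - i) = p := by
        have := Finset.mem_range.mp hi; omega
      have := hterm i (p - i)
      rw [hip] at this
      exact this
    have hIntPi : ∀ p : ℕ, Integrable (fun z : Fin (N + 1) → ℝ => (∑ j, z j * c j) ^ p)
        (Measure.pi fun _ => γ) := by
      intro p
      have h2 := (mp.integrable_comp_emb e.measurableEmbedding (g := g p)).mpr (hIntProd p)
      apply h2.congr
      filter_upwards with z
      exact hcomp p z
    refine ⟨hIntPi, ?_⟩
    intro r
    -- pass to the product
    have h3 : ∫ z : Fin (N + 1) → ℝ, (∑ j, z j * c j) ^ (2 * r) ∂(Measure.pi fun _ => γ)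
        = ∫ q, g (2 * r) q ∂(γ.prod (Measure.pi fun _ => γ)) := by
      rw [← mp.integral_comp e.measurableEmbedding (g (2 * r))]
      congr 1
      funext z
      exact (hcomp (2 * r) z).symm
    rw [h3]
    -- expand binomial
    have h4 : ∫ q, g (2 * r) q ∂(γ.prod (Measure.pi fun _ => γ))
        = ∑ i ∈ Finset.range (2 * r + 1),
            ((c 0) ^ i * ∫ x, x ^ i ∂γ) *
            (∫ y : Fin N → ℝ, (∑ j, y j * c' j) ^ (2 * r - i) ∂(Measure.pi fun _ => γ)) *
            ((Nat.choose (2 * r) i : ℝ)) := by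
      have hgr : g (2 * r) = fun q => ∑ i ∈ Finset.range (2 * r + 1),
          (q.1 * c 0) ^ i * (∑ j, q.2 j * c' j) ^ (2 * r - i) * ((Nat.choose (2 * r) i : ℝ)) := by
        funext q
        show (q.1 * c 0 + ∑ j, q.2 j * c' j) ^ (2 * r) = _
        rw [add_pow]
      rw [hgr, integral_finset_sum]
      · apply Finset.sum_congr rfl
        intro i hi
        have hip : i + (2 * r - i) = 2 * r := by
          have := Finset.mem_range.mp hi; omega
        have e5 : (fun q : ℝ × (Fin N → ℝ) =>
            (q.1 * c 0) ^ i * (∑ j, q.2 j * c' j) ^ (2 * r - i) * ((Nat.choose (2 * r) i : ℝ)))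
            = fun q => ((fun x => (x * c 0) ^ i) q.1 * (fun y => (∑ j, y j * c' j) ^ (2 * r - i)) q.2) * ((Nat.choose (2 * r) i : ℝ)) := rfl
        rw [e5, integral_mul_const,
          integral_prod_mul (f := fun x : ℝ => (x * c 0) ^ i)
            (g := fun y : Fin N → ℝ => (∑ j, y j * c' j) ^ (2 * r - i))]
        congr 2
        rw [← integral_const_mul]
        congr 1
        funext x
        rw [mul_pow]; ring
      · intro i hi
        have hip : i + (2 * r - i) = 2 * r := by
          have := Finset.mem_range.mp hi; omega
        have := hterm i (2 * r - i)
        rw [hip] at this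
        exact this
    rw [h4]
    -- kill odd terms, reindex even ones
    have hodd : ∀ i ∈ Finset.range (2 * r + 1), ¬ Even i →
        ((c 0) ^ i * ∫ x, x ^ i ∂γ) *
          (∫ y : Fin N → ℝ, (∑ j, y j * c' j) ^ (2 * r - i) ∂(Measure.pi fun _ => γ)) *
          ((Nat.choose (2 * r) i : ℝ)) = 0 := by
      intro i _ hi
      obtain ⟨m, hm⟩ := Nat.not_even_iff_odd.mp hi
      rw [hm, gauss_moment_odd]
      ring
    rw [← Finset.sum_filter_add_sum_filter_not (Finset.range (2 * r + 1)) (fun i => Even i)]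
    rw [Finset.sum_eq_zero (fun i hi => hodd i (Finset.mem_filter.mp hi).1 (Finset.mem_filter.mp hi).2), add_zero]
    have hre : ∑ i ∈ Finset.filter (fun i => Even i) (Finset.range (2 * r + 1)),
        ((c 0) ^ i * ∫ x, x ^ i ∂γ) *
          (∫ y : Fin N → ℝ, (∑ j, y j * c' j) ^ (2 * r - i) ∂(Measure.pi fun _ => γ)) *
          ((Nat.choose (2 * r) i : ℝ))
        = ∑ j ∈ Finset.range (r + 1),
            ((c 0) ^ (2 * j) * ∫ x, x ^ (2 * j) ∂γ) *
            (∫ y : Fin N → ℝ, (∑ j', y j' * c' j') ^ (2 * r - 2 * j) ∂(Measure.pi fun _ => γ)) *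
            ((Nat.choose (2 * r) (2 * j) : ℝ)) := by
      apply Finset.sum_nbij' (fun i => i / 2) (fun j => 2 * j)
      · intro i hi
        simp only [Finset.mem_filter, Finset.mem_range] at hi ⊢
        omega
      · intro j hj
        simp only [Finset.mem_range] at hj
        simp only [Finset.mem_filter, Finset.mem_range]
        exact ⟨by omega, ⟨j, by ring⟩⟩
      · intro i hi
        simp only [Finset.mem_filter, Finset.mem_range] at hi
        obtain ⟨h1, m, hm⟩ := hi
        omega
      · intro j hj
        omega
      · intro i hi
        simp only [Finset.mem_filter, Finset.mem_range] at hi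
        obtain ⟨h1, m, hm⟩ := hi
        have h9 : 2 * (i / 2) = i := by omega
        rw [h9]
    rw [hre]
    -- evaluate
    have hfin : ∑ j ∈ Finset.range (r + 1),
        ((c 0) ^ (2 * j) * ∫ x, x ^ (2 * j) ∂γ) *
        (∫ y : Fin N → ℝ, (∑ j', y j' * c' j') ^ (2 * r - 2 * j) ∂(Measure.pi fun _ => γ)) *
        ((Nat.choose (2 * r) (2 * j) : ℝ))
        = ∑ j ∈ Finset.range (r + 1),
          ((2 * r).choose (2 * j) : ℝ) * ((2 * j - 1)‼ : ℕ) * ((2 * (r - j) - 1)‼ : ℕ) *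
            ((c 0) ^ 2) ^ j * ((∑ j', (c' j') ^ 2)) ^ (r - j) := by
      apply Finset.sum_congr rfl
      intro j hj
      have hjr : j ≤ r := Nat.lt_succ_iff.mp (Finset.mem_range.mp hj)
      have h6 : 2 * r - 2 * j = 2 * (r - j) := by omega
      rw [gauss_moment_even j, h6, ihVal (r - j)]
      rw [← pow_mul]
      ring
    rw [hfin, sum_ident r ((c 0) ^ 2) (∑ j', (c' j') ^ 2)]
    congr 1
    rw [Fin.sum_univ_succAbove (fun j => (c j) ^ 2) 0]


lemma int_g1 : Integrable (fun x : ℝ => (x ^ 2 - 1) ^ 2) γ := by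
  have h : (fun x : ℝ => (x ^ 2 - 1) ^ 2) = fun x : ℝ => x ^ 4 - 2 * x ^ 2 + 1 := by
    funext x; ring
  rw [h]
  exact ((int_pow_gauss 4).sub ((int_pow_gauss 2).const_mul 2)).add (integrable_const 1)

lemma int_g1_val : ∫ x, ((x : ℝ) ^ 2 - 1) ^ 2 ∂γ = 2 := by
  have hsub : Integrable (fun x : ℝ => x ^ (2 * 2) - 2 * x ^ (2 * 1)) γ :=
    (int_pow_gauss (2 * 2)).sub ((int_pow_gauss (2 * 1)).const_mul 2)
  have h : (fun x : ℝ => (x ^ 2 - 1) ^ 2) = fun x : ℝ => (x ^ (2 * 2) - 2 * x ^ (2 * 1)) + 1 := by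
    funext x; ring
  rw [h, integral_add hsub (integrable_const 1),
      integral_sub (int_pow_gauss (2 * 2)) ((int_pow_gauss (2 * 1)).const_mul 2),
      integral_const_mul, gauss_moment_even 2, gauss_moment_even 1, integral_const]
  norm_num [show (2 * 2 - 1)‼ = 3 from by decide, show (2 * 1 - 1)‼ = 1 from by decide]

/-- Truncated moment bound: for `η = −(z₁² − 1)⟨z, u⟩²` and the event
`E = {|z₁| ≤ √(2β log n)} ∩ {‖z‖₂ ≤ √(3n)}`, for every `k ≥ 2`,
`E[|η 1_E|^k] ≤ 2(2β log n)^{k−2} · 2^k · k!`. -/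
theorem truncated_eta_moment_bound (n : ℕ) (hn : 0 < n) (β : ℝ)
    (hβ : 1 ≤ 2 * β * Real.log n)
    (u : Fin n → ℝ) (hu : ∑ i, (u i) ^ 2 = 1) (hu1 : u ⟨0, hn⟩ = 0)
    (k : ℕ) (hk : 2 ≤ k) :
    ∫ z : Fin n → ℝ,
        |(-((z ⟨0, hn⟩) ^ 2 - 1)) * (∑ j, z j * u j) ^ 2| ^ k *
          Set.indicator {z : Fin n → ℝ |
              |z ⟨0, hn⟩| ≤ Real.sqrt (2 * β * Real.log n) ∧
              (∑ j, (z j) ^ 2) ≤ 3 * n} (fun _ => (1 : ℝ)) z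
      ∂(Measure.pi fun _ : Fin n => gaussianReal 0 1)
      ≤ 2 * (2 * β * Real.log n) ^ (k - 2) * 2 ^ k * (Nat.factorial k) := by
  obtain ⟨N, rfl⟩ : ∃ N, n = N + 1 := ⟨n - 1, by omega⟩
  have hγ : gaussianReal 0 1 = γ := rfl
  rw [hγ]
  have h00 : (⟨0, hn⟩ : Fin (N + 1)) = 0 := rfl
  rw [h00] at hu1
  simp only [h00]
  set L := 2 * β * Real.log ((N + 1 : ℕ) : ℝ) with hLdef
  have hL1 : (1 : ℝ) ≤ L := hβ
  have hL0 : (0 : ℝ) < L := lt_of_lt_of_le one_pos hL1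
  set e := MeasurableEquiv.piFinSuccAbove (fun _ : Fin (N + 1) => ℝ) 0 with he
  have mp := measurePreserving_piFinSuccAbove (fun _ : Fin (N + 1) => γ) 0
  rw [← he] at mp
  set u' : Fin N → ℝ := fun j => u ((0 : Fin (N + 1)).succAbove j) with hu'
  obtain ⟨kInt, kVal⟩ := key N u'
  have hsum : ∀ z : Fin (N + 1) → ℝ,
      (∑ j, z j * u j) = ∑ j : Fin N, (e z).2 j * u' j := by
    intro z
    rw [Fin.sum_univ_succAbove (fun j => z j * u j) 0, hu1, mul_zero, zero_add]
    rfl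
  have hu'sum : ∑ j, (u' j) ^ 2 = 1 := by
    have h7 := Fin.sum_univ_succAbove (fun j => (u j) ^ 2) 0
    rw [hu, hu1] at h7
    simpa [hu'] using h7.symm
  set H : (Fin (N + 1) → ℝ) → ℝ :=
    fun z => ((z 0) ^ 2 - 1) ^ 2 * (∑ j, z j * u j) ^ (2 * k) with hH
  set Φ : ℝ × (Fin N → ℝ) → ℝ :=
    fun q => (q.1 ^ 2 - 1) ^ 2 * (∑ j, q.2 j * u' j) ^ (2 * k) with hΦ
  have hcomp : ∀ z, Φ (e z) = H z := by
    intro z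
    show ((e z).1 ^ 2 - 1) ^ 2 * (∑ j, (e z).2 j * u' j) ^ (2 * k)
      = ((z 0) ^ 2 - 1) ^ 2 * (∑ j, z j * u j) ^ (2 * k)
    rw [hsum z]
    rfl
  have hΦint : Integrable Φ (γ.prod (Measure.pi fun _ => γ)) := int_g1.mul_prod (kInt (2 * k))
  have hHint : Integrable H (Measure.pi fun _ : Fin (N + 1) => γ) := by
    have h2 := (mp.integrable_comp_emb e.measurableEmbedding (g := Φ)).mpr hΦint
    apply h2.congr
    filter_upwards with z
    exact hcomp z
  have hHval : ∫ z, H z ∂(Measure.pi fun _ : Fin (N + 1) => γ) = 2 * ((2 * k - 1)‼ : ℕ) := by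
    have h3 : ∫ z, H z ∂(Measure.pi fun _ : Fin (N + 1) => γ)
        = ∫ q, Φ q ∂(γ.prod (Measure.pi fun _ => γ)) := by
      rw [← mp.integral_comp e.measurableEmbedding Φ]
      congr 1
      funext z
      exact (hcomp z).symm
    rw [h3, hΦ,
      integral_prod_mul (f := fun x : ℝ => (x ^ 2 - 1) ^ 2)
        (g := fun y : Fin N → ℝ => (∑ j, y j * u' j) ^ (2 * k)),
      int_g1_val, kVal k, hu'sum, one_pow, mul_one]
  have hpt : ∀ z : Fin (N + 1) → ℝ,
      |(-((z 0) ^ 2 - 1)) * (∑ j, z j * u j) ^ 2| ^ k *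
        Set.indicator {z : Fin (N + 1) → ℝ |
            |z 0| ≤ Real.sqrt L ∧ (∑ j, (z j) ^ 2) ≤ 3 * ((N + 1 : ℕ) : ℝ)} (fun _ => (1 : ℝ)) z
      ≤ L ^ (k - 2) * H z := by
    intro z
    by_cases hz : z ∈ {z : Fin (N + 1) → ℝ |
        |z 0| ≤ Real.sqrt L ∧ (∑ j, (z j) ^ 2) ≤ 3 * ((N + 1 : ℕ) : ℝ)}
    · rw [Set.indicator_of_mem hz, mul_one]
      have ha : |z 0 ^ 2 - 1| ≤ L := by
        have h6 := pow_le_pow_left₀ (abs_nonneg _) hz.1 2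
        rw [sq_abs, Real.sq_sqrt hL0.le] at h6
        rw [abs_le]
        constructor <;> nlinarith [sq_nonneg (z 0)]
      have hsplit : |(-((z 0) ^ 2 - 1)) * (∑ j, z j * u j) ^ 2| ^ k
          = |z 0 ^ 2 - 1| ^ (k - 2) * (((z 0) ^ 2 - 1) ^ 2 * (∑ j, z j * u j) ^ (2 * k)) := by
        rw [abs_mul, abs_neg, abs_of_nonneg (sq_nonneg (∑ j, z j * u j)), mul_pow, ← pow_mul]
        have h8 : |z 0 ^ 2 - 1| ^ k = |z 0 ^ 2 - 1| ^ (k - 2) * (z 0 ^ 2 - 1) ^ 2 := by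
          have h8a : |z 0 ^ 2 - 1| ^ k = |z 0 ^ 2 - 1| ^ (k - 2) * |z 0 ^ 2 - 1| ^ 2 := by
            rw [← pow_add]
            congr 1
            omega
          rw [h8a, sq_abs]
        rw [h8]
        ring
      have hHz : H z = ((z 0) ^ 2 - 1) ^ 2 * (∑ j, z j * u j) ^ (2 * k) := rfl
      rw [hsplit, hHz]
      exact mul_le_mul_of_nonneg_right (pow_le_pow_left₀ (abs_nonneg _) ha _)
        (by rw [pow_mul]; positivity)
    · have hHz : H z = ((z 0) ^ 2 - 1) ^ 2 * (∑ j, z j * u j) ^ (2 * k) := rfl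
      rw [Set.indicator_of_notMem hz, mul_zero, hHz, pow_mul]
      positivity
  calc ∫ z : Fin (N + 1) → ℝ,
        |(-((z 0) ^ 2 - 1)) * (∑ j, z j * u j) ^ 2| ^ k *
          Set.indicator {z : Fin (N + 1) → ℝ |
              |z 0| ≤ Real.sqrt L ∧ (∑ j, (z j) ^ 2) ≤ 3 * ((N + 1 : ℕ) : ℝ)} (fun _ => (1 : ℝ)) z
        ∂(Measure.pi fun _ : Fin (N + 1) => γ)
      ≤ ∫ z, L ^ (k - 2) * H z ∂(Measure.pi fun _ : Fin (N + 1) => γ) := by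
        apply integral_mono_of_nonneg
        · filter_upwards with z
          exact mul_nonneg (pow_nonneg (abs_nonneg _) _)
            (Set.indicator_nonneg (fun _ _ => zero_le_one) z)
        · exact hHint.const_mul _
        · filter_upwards with z
          exact hpt z
    _ = L ^ (k - 2) * ∫ z, H z ∂(Measure.pi fun _ : Fin (N + 1) => γ) := integral_const_mul _ _
    _ = L ^ (k - 2) * (2 * ((2 * k - 1)‼ : ℕ)) := by rw [hHval]
    _ ≤ 2 * L ^ (k - 2) * 2 ^ k * (Nat.factorial k) := by
        have hc : ((2 * k - 1)‼ : ℝ) ≤ ((2 ^ k * k ! : ℕ) : ℝ) := Nat.cast_le.mpr (dfact_le k)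
        push_cast at hc
        have h9 : (0:ℝ) ≤ L ^ (k - 2) := le_of_lt (pow_pos hL0 _)
        nlinarith [mul_le_mul_of_nonneg_left hc h9]
end
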